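/- arXiv:1108.3207 — 7 statements merged into one kernel-verified Lean document; each statement's English description precedes it below -/
import Mathlib

section
/- Let $\mathcal{A} \subseteq \mathcal{P}[n]$ be intersecting, let $U \subseteq [n]$ have even order, let $v \in [n] - U$, and let $f : U \to U$ be a pairing function. Then $\mathcal{C}_{U,v,f}\mathcal{A}$ is intersecting. -/
open Finset

/-- A family of finite sets is intersecting if any two members meet. -/
def IsIntersecting (𝓑 : Finset (Finset ℕ)) : Prop :=
  ∀ A ∈ 𝓑, ∀ B ∈ 𝓑, (A ∩ B).Nonempty

instance : DecidablePred IsIntersecting :=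
  fun 𝓑 => decidable_of_iff (∀ A ∈ 𝓑, ∀ B ∈ 𝓑, (A ∩ B).Nonempty) Iff.rfl

/-- A family is `t`-intersecting if any two members meet in at least `t` elements. -/
def TIntersecting (t : ℕ) (𝓐 : Finset (Finset ℕ)) : Prop :=
  ∀ A ∈ 𝓐, ∀ B ∈ 𝓐, t ≤ (A ∩ B).card

/-- The probability that the p-random subfamily of `𝓐` is intersecting. -/
noncomputable def probInter (p : ℝ) (𝓐 : Finset (Finset ℕ)) : ℝ :=
  ∑ 𝓑 ∈ 𝓐.powerset.filter IsIntersecting,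
    p ^ 𝓑.card * (1 - p) ^ (𝓐.card - 𝓑.card)

/-- The number of intersecting subfamilies of `𝓐` of order `m`. -/
def numInter (𝓐 : Finset (Finset ℕ)) (m : ℕ) : ℕ :=
  ((𝓐.powerset.filter IsIntersecting).filter (fun 𝓑 => 𝓑.card = m)).card

/-- `[n]^{(≥ r)}`: all subsets of `[n] = {1,…,n}` of size at least `r`. -/
def atLeast (n r : ℕ) : Finset (Finset ℕ) :=
  (Finset.Icc 1 n).powerset.filter (fun A => r ≤ A.card)

/-- `[n]^{(r)}`: all subsets of `[n] = {1,…,n}` of size exactly `r`. -/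
def uniformFam (n r : ℕ) : Finset (Finset ℕ) :=
  Finset.powersetCard r (Finset.Icc 1 n)

/-- The `ij`-compression of a set. -/
def setCompress (i j : ℕ) (A : Finset ℕ) : Finset ℕ :=
  if j ∈ A ∧ i ∉ A then insert i (A.erase j) else A

/-- The `ij`-compression of a family. -/
def famCompress (i j : ℕ) (𝓐 : Finset (Finset ℕ)) : Finset (Finset ℕ) :=
  𝓐.image (setCompress i j) ∪ 𝓐.filter (fun A => setCompress i j A ∈ 𝓐)

/-- A family is left-compressed if it is `ij`-compressed for all `i < j` in `[n]`. -/
def LeftCompressed (n : ℕ) (𝓐 : Finset (Finset ℕ)) : Prop :=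
  ∀ i j : ℕ, 1 ≤ i → i < j → j ≤ n → famCompress i j 𝓐 = 𝓐

/-- The `UV`-compression of a set. -/
def setUV (U V A : Finset ℕ) : Finset ℕ :=
  if V ⊆ A ∧ Disjoint U A then (A ∪ U) \ V else A

/-- The `UV`-compression of a family. -/
def famUV (U V : Finset ℕ) (𝓐 : Finset (Finset ℕ)) : Finset (Finset ℕ) :=
  𝓐.image (setUV U V) ∪ 𝓐.filter (fun A => setUV U V A ∈ 𝓐)

/-- `f` is a pairing function on `U`: an involution on `U` with no fixed point. -/
def IsPairing (f : ℕ → ℕ) (U : Finset ℕ) : Prop :=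
  (∀ x ∈ U, f x ∈ U) ∧ (∀ x ∈ U, f (f x) = x) ∧ (∀ x ∈ U, f x ≠ x)

/-- The `(U,v,f)`-compression of a set. -/
def setUvf (U : Finset ℕ) (v : ℕ) (f : ℕ → ℕ) (A : Finset ℕ) : Finset ℕ :=
  if v ∈ A then A else (A ∩ U).image f ∪ {v} ∪ (A \ U)

/-- The `(U,v,f)`-compression of a family. -/
def famUvf (U : Finset ℕ) (v : ℕ) (f : ℕ → ℕ) (𝓐 : Finset (Finset ℕ)) : Finset (Finset ℕ) :=
  𝓐.image (setUvf U v f) ∪ 𝓐.filter (fun A => setUvf U v f A ∈ 𝓐)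

lemma v_mem_setUvf (U : Finset ℕ) (v : ℕ) (f : ℕ → ℕ) (A : Finset ℕ) :
    v ∈ setUvf U v f A := by
  unfold setUvf
  split
  · assumption
  · simp

lemma core_uvf (𝓐 : Finset (Finset ℕ)) (hint : IsIntersecting 𝓐)
    (U : Finset ℕ) (v : ℕ) (f : ℕ → ℕ) (hf : IsPairing f U)
    (X : Finset ℕ) (hX : X ∈ 𝓐) (hCX : setUvf U v f X ∈ 𝓐) (hvX : v ∉ X)
    (B : Finset ℕ) (hB : B ∈ 𝓐) (hvB : v ∉ B) :
    (X ∩ setUvf U v f B).Nonempty := by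
  obtain ⟨w, hw⟩ := hint _ hCX _ hB
  rw [mem_inter] at hw
  obtain ⟨hwC, hwB⟩ := hw
  rw [setUvf, if_neg hvX] at hwC
  rw [setUvf, if_neg hvB]
  simp only [mem_union, mem_image, mem_singleton, mem_inter, mem_sdiff] at hwC
  rcases hwC with (⟨x, ⟨hxX, hxU⟩, hfx⟩ | hwv) | ⟨hwX, hwU⟩
  · refine ⟨x, ?_⟩
    simp only [mem_union, mem_image, mem_singleton, mem_inter, mem_sdiff]
    refine ⟨hxX, Or.inl (Or.inl ⟨w, ⟨hwB, ?_⟩, ?_⟩)⟩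
    · subst hfx; exact hf.1 x hxU
    · subst hfx; exact hf.2.1 x hxU
  · exact absurd (hwv ▸ hwB) hvB
  · refine ⟨w, ?_⟩
    simp only [mem_union, mem_image, mem_singleton, mem_inter, mem_sdiff]
    exact ⟨hwX, Or.inr ⟨hwB, hwU⟩⟩

theorem stmt6 (n : ℕ) (𝓐 : Finset (Finset ℕ)) (h𝓐 : 𝓐 ⊆ (Finset.Icc 1 n).powerset)
    (hint : IsIntersecting 𝓐)
    (U : Finset ℕ) (hU : U ⊆ Finset.Icc 1 n) (hUeven : Even U.card)
    (v : ℕ) (hv : v ∈ Finset.Icc 1 n) (hvU : v ∉ U)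
    (f : ℕ → ℕ) (hf : IsPairing f U) :
    IsIntersecting (famUvf U v f 𝓐) := by
  have key : ∀ X ∈ famUvf U v f 𝓐, v ∉ X → X ∈ 𝓐 ∧ setUvf U v f X ∈ 𝓐 := by
    intro X hX hvX
    rw [famUvf, mem_union] at hX
    rcases hX with h | h
    · obtain ⟨A, _, rfl⟩ := mem_image.mp h
      exact absurd (v_mem_setUvf U v f A) hvX
    · exact mem_filter.mp h
  have key2 : ∀ X ∈ famUvf U v f 𝓐,
      X ∈ 𝓐 ∨ ∃ B ∈ 𝓐, v ∉ B ∧ X = setUvf U v f B := by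
    intro X hX
    rw [famUvf, mem_union] at hX
    rcases hX with h | h
    · obtain ⟨A, hA, rfl⟩ := mem_image.mp h
      by_cases hvA : v ∈ A
      · rw [setUvf, if_pos hvA]; exact Or.inl hA
      · exact Or.inr ⟨A, hA, hvA, rfl⟩
    · exact Or.inl (mem_filter.mp h).1
  intro A' hA' B' hB'
  by_cases hvA : v ∈ A'
  · by_cases hvB : v ∈ B'
    · exact ⟨v, mem_inter.mpr ⟨hvA, hvB⟩⟩
    · obtain ⟨hB1, hB2⟩ := key B' hB' hvB
      rcases key2 A' hA' with h | ⟨C, hC, hvC, rfl⟩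
      · exact hint _ h _ hB1
      · rw [inter_comm]
        exact core_uvf 𝓐 hint U v f hf B' hB1 hB2 hvB C hC hvC
  · obtain ⟨hA1, hA2⟩ := key A' hA' hvA
    rcases key2 B' hB' with h | ⟨C, hC, hvC, rfl⟩
    · exact hint _ hA1 _ h
    · exact core_uvf 𝓐 hint U v f hf A' hA1 hA2 hvA C hC hvC
end

section
/- Let $\mathcal{A} \subseteq \mathcal{P}[n]$, let $U \subseteq [n]$ have even order, let $v \in [n] - U$, let $f : U \to U$ be a pairing function, and let $\mathcal{C} = \mathcal{C}_{U,v,f}(\mathcal{A})$. Then there exists an injection $\phi$ from the collection of intersecting subfamilies of $\mathcal{A}$ to the collection of intersecting subfamilies of $\mathcal{C}$ such that $|\phi(\mathcal{B})| = |\mathcal{B}|$ for every intersecting subfamily $\mathcal{B} \subseteq \mathcal{A}$. -/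
open Finset

-- auxiliary development

namespace UvfAux

variable {U : Finset ℕ} {v : ℕ} {f : ℕ → ℕ}

lemma setUvf_of_mem {A : Finset ℕ} (h : v ∈ A) : setUvf U v f A = A := if_pos h

lemma setUvf_of_notMem {A : Finset ℕ} (h : v ∉ A) :
    setUvf U v f A = (A ∩ U).image f ∪ {v} ∪ (A \ U) := if_neg h

lemma v_mem_setUvf {A : Finset ℕ} (h : v ∉ A) : v ∈ setUvf U v f A := by
  rw [setUvf_of_notMem h]; simp

/-- decompression -/
def decomp (U : Finset ℕ) (v : ℕ) (f : ℕ → ℕ) (X : Finset ℕ) : Finset ℕ :=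
  (X ∩ U).image f ∪ ((X \ U).erase v)

lemma image_f_subset (hf : IsPairing f U) (S : Finset ℕ) (hS : S ⊆ U) : S.image f ⊆ U := by
  intro x hx
  obtain ⟨b, hb, rfl⟩ := mem_image.1 hx
  exact hf.1 b (hS hb)

lemma image_f_image_f (hf : IsPairing f U) (S : Finset ℕ) (hS : S ⊆ U) :
    (S.image f).image f = S := by
  rw [Finset.image_image]
  have : Set.EqOn (f ∘ f) id S := fun x hx => hf.2.1 x (hS hx)
  rw [Finset.image_congr this, Finset.image_id]

lemma decomp_setUvf (hf : IsPairing f U) (hvU : v ∉ U) {A : Finset ℕ} (h : v ∉ A) :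
    decomp U v f (setUvf U v f A) = A := by
  have h1 : (setUvf U v f A) ∩ U = (A ∩ U).image f := by
    rw [setUvf_of_notMem h]
    ext a
    simp only [mem_inter, mem_union, mem_singleton, mem_sdiff]
    constructor
    · rintro ⟨(h' | rfl) | ⟨_, hnU⟩, haU⟩
      · exact h'
      · exact absurd haU hvU
      · exact absurd haU hnU
    · intro h'
      exact ⟨Or.inl (Or.inl h'), image_f_subset hf _ (inter_subset_right) h'⟩
  have h2 : ((setUvf U v f A) \ U).erase v = A \ U := by
    rw [setUvf_of_notMem h]
    ext a
    simp only [mem_erase, mem_sdiff, mem_union, mem_singleton]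
    constructor
    · rintro ⟨hav, (h' | rfl) | h', haU⟩
      · exact absurd (image_f_subset hf _ (inter_subset_right) h') haU
      · exact absurd rfl hav
      · exact h'
    · rintro ⟨haA, haU⟩
      exact ⟨fun hh => h (hh ▸ haA), Or.inr ⟨haA, haU⟩, haU⟩
  rw [decomp, h1, h2, image_f_image_f hf _ (inter_subset_right)]
  exact sup_inf_sdiff A U

lemma setUvf_inj (hf : IsPairing f U) (hvU : v ∉ U) {A B : Finset ℕ}
    (hA : v ∉ A) (hB : v ∉ B) (h : setUvf U v f A = setUvf U v f B) : A = B := by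
  rw [← decomp_setUvf hf hvU hA, h, decomp_setUvf hf hvU hB]

/-- key symmetry lemma -/
lemma inter_setUvf (hf : IsPairing f U) {A B : Finset ℕ} (hA : v ∉ A) (hB : v ∉ B)
    (h : (A ∩ setUvf U v f B).Nonempty) : (setUvf U v f A ∩ B).Nonempty := by
  obtain ⟨x, hx⟩ := h
  rw [mem_inter, setUvf_of_notMem hB] at hx
  obtain ⟨hxA, hxC⟩ := hx
  simp only [mem_union, mem_singleton, mem_sdiff] at hxC
  rcases hxC with (hxi | rfl) | ⟨hxB, hxU⟩
  · obtain ⟨b, hb, rfl⟩ := mem_image.1 hxi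
    have hbU : b ∈ U := (mem_inter.1 hb).2
    have hfbU : f b ∈ U := hf.1 b hbU
    refine ⟨f (f b), mem_inter.2 ⟨?_, ?_⟩⟩
    · rw [setUvf_of_notMem hA]
      simp only [mem_union]
      exact Or.inl (Or.inl (mem_image_of_mem f (mem_inter.2 ⟨hxA, hfbU⟩)))
    · rw [hf.2.1 b hbU]
      exact (mem_inter.1 hb).1
  · exact absurd hxA hA
  · refine ⟨x, mem_inter.2 ⟨?_, hxB⟩⟩
    rw [setUvf_of_notMem hA]
    simp only [mem_union]
    exact Or.inr (mem_sdiff.2 ⟨hxA, hxU⟩)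

/-- the family `𝓚` of sets in `𝓑` not containing `v` whose compression is outside `𝓑`. -/
def famK (U : Finset ℕ) (v : ℕ) (f : ℕ → ℕ) (𝓑 : Finset (Finset ℕ)) : Finset (Finset ℕ) :=
  𝓑.filter (fun B => v ∉ B ∧ setUvf U v f B ∉ 𝓑)

def Closed (𝓐 : Finset (Finset ℕ)) (U : Finset ℕ) (v : ℕ) (f : ℕ → ℕ)
    (𝓑 S : Finset (Finset ℕ)) : Prop :=
  (∀ K ∈ famK U v f 𝓑, setUvf U v f K ∉ 𝓐 → K ∈ S) ∧
  (∀ K' ∈ famK U v f 𝓑, (∃ K ∈ S, setUvf U v f K ∩ K' = ∅) → K' ∈ S)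

noncomputable def famM (𝓐 : Finset (Finset ℕ)) (U : Finset ℕ) (v : ℕ) (f : ℕ → ℕ)
    (𝓑 : Finset (Finset ℕ)) : Finset (Finset ℕ) :=
  @Finset.filter _
    (fun K => ∀ S ∈ (famK U v f 𝓑).powerset, Closed 𝓐 U v f 𝓑 S → K ∈ S)
    (fun _ => Classical.propDecidable _) (famK U v f 𝓑)

lemma mem_famM {𝓐 𝓑 : Finset (Finset ℕ)} {K : Finset ℕ} :
    K ∈ famM 𝓐 U v f 𝓑 ↔ K ∈ famK U v f 𝓑 ∧
      ∀ S ∈ (famK U v f 𝓑).powerset, Closed 𝓐 U v f 𝓑 S → K ∈ S := by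
  unfold famM
  exact @Finset.mem_filter _ _ (fun _ => Classical.propDecidable _) _ _

noncomputable def phi (𝓐 : Finset (Finset ℕ)) (U : Finset ℕ) (v : ℕ) (f : ℕ → ℕ)
    (𝓑 : Finset (Finset ℕ)) : Finset (Finset ℕ) :=
  (𝓑 \ famM 𝓐 U v f 𝓑) ∪ (famM 𝓐 U v f 𝓑).image (setUvf U v f)

variable {𝓐 𝓑 S : Finset (Finset ℕ)}

lemma famK_subset : famK U v f 𝓑 ⊆ 𝓑 := filter_subset _ _

lemma famM_subset_famK : famM 𝓐 U v f 𝓑 ⊆ famK U v f 𝓑 := fun K hK => (mem_famM.1 hK).1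

lemma famM_subset : famM 𝓐 U v f 𝓑 ⊆ 𝓑 := famM_subset_famK.trans famK_subset

lemma famM_min (hS : S ⊆ famK U v f 𝓑) (hc : Closed 𝓐 U v f 𝓑 S) :
    famM 𝓐 U v f 𝓑 ⊆ S := fun K hK => (mem_famM.1 hK).2 S (mem_powerset.2 hS) hc

lemma famM_closed : Closed 𝓐 U v f 𝓑 (famM 𝓐 U v f 𝓑) := by
  constructor
  · intro K hK hKA
    exact mem_famM.2 ⟨hK, fun S _ hSc => hSc.1 K hK hKA⟩
  · rintro K' hK' ⟨K, hK, hdisj⟩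
    refine mem_famM.2 ⟨hK', fun S hS hSc => hSc.2 K' hK' ⟨K, ?_, hdisj⟩⟩
    exact (mem_famM.1 hK).2 S hS hSc

lemma mem_famK {B : Finset ℕ} (h : B ∈ famK U v f 𝓑) :
    B ∈ 𝓑 ∧ v ∉ B ∧ setUvf U v f B ∉ 𝓑 := by
  have := mem_filter.1 h; exact ⟨this.1, this.2.1, this.2.2⟩


section main

lemma CB_mem_A (h𝓑A : 𝓑 ⊆ 𝓐) {B : Finset ℕ} (hB : B ∈ 𝓑) (hBM : B ∉ famM 𝓐 U v f 𝓑) :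
    setUvf U v f B ∈ 𝓐 := by
  by_cases hv : v ∈ B
  · rw [setUvf_of_mem hv]; exact h𝓑A hB
  by_cases hCB : setUvf U v f B ∈ 𝓑
  · exact h𝓑A hCB
  · by_contra hCA
    exact hBM ((famM_closed).1 B (mem_filter.2 ⟨hB, hv, hCB⟩) hCA)

lemma phi_subset (h𝓑A : 𝓑 ⊆ 𝓐) : phi 𝓐 U v f 𝓑 ⊆ famUvf U v f 𝓐 := by
  intro X hX
  rcases mem_union.1 hX with hX | hX
  · obtain ⟨hXB, hXM⟩ := mem_sdiff.1 hX
    exact mem_union_right _ (mem_filter.2 ⟨h𝓑A hXB, CB_mem_A h𝓑A hXB hXM⟩)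
  · obtain ⟨K, hK, rfl⟩ := mem_image.1 hX
    exact mem_union_left _ (mem_image_of_mem _ (h𝓑A (famM_subset hK)))

lemma mixed (hf : IsPairing f U) (hint : IsIntersecting 𝓑) :
    ∀ X ∈ 𝓑 \ famM 𝓐 U v f 𝓑, ∀ K ∈ famM 𝓐 U v f 𝓑,
      (X ∩ setUvf U v f K).Nonempty := by
  intro X hX K hK
  obtain ⟨hXB, hXM⟩ := mem_sdiff.1 hX
  obtain ⟨hKB, hKv, hKC⟩ := mem_famK (famM_subset_famK hK)
  by_cases hv : v ∈ X
  · exact ⟨v, mem_inter.2 ⟨hv, v_mem_setUvf hKv⟩⟩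
  by_cases hCX : setUvf U v f X ∈ 𝓑
  · have h1 : (K ∩ setUvf U v f X).Nonempty := by
      rw [inter_comm]; exact hint _ hCX _ hKB
    have h2 := inter_setUvf hf hKv hv h1
    rwa [inter_comm] at h2
  · have hXK : X ∈ famK U v f 𝓑 := mem_filter.2 ⟨hXB, hv, hCX⟩
    by_contra hempty
    have hd : setUvf U v f K ∩ X = ∅ := by
      rw [← Finset.not_nonempty_iff_eq_empty]
      intro h; exact hempty (by rwa [inter_comm] at h)
    exact hXM ((famM_closed).2 X hXK ⟨K, hK, hd⟩)

lemma phi_int (hf : IsPairing f U) (hint : IsIntersecting 𝓑) : IsIntersecting (phi 𝓐 U v f 𝓑) := by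
  intro X hX Y hY
  rcases mem_union.1 hX with hX | hX <;> rcases mem_union.1 hY with hY | hY
  · exact hint _ ((mem_sdiff.1 hX).1) _ ((mem_sdiff.1 hY).1)
  · obtain ⟨K, hK, rfl⟩ := mem_image.1 hY; exact mixed hf hint X hX K hK
  · obtain ⟨K, hK, rfl⟩ := mem_image.1 hX
    have := mixed hf hint Y hY K hK; rwa [inter_comm] at this
  · obtain ⟨K, hK, rfl⟩ := mem_image.1 hX
    obtain ⟨K', hK', rfl⟩ := mem_image.1 hY
    exact ⟨v, mem_inter.2 ⟨v_mem_setUvf (mem_famK (famM_subset_famK hK)).2.1,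
      v_mem_setUvf (mem_famK (famM_subset_famK hK')).2.1⟩⟩

lemma image_disj : Disjoint ((famM 𝓐 U v f 𝓑).image (setUvf U v f)) 𝓑 := by
  rw [disjoint_left]; rintro X hX hXB
  obtain ⟨K, hK, rfl⟩ := mem_image.1 hX
  exact (mem_famK (famM_subset_famK hK)).2.2 hXB

lemma phi_card (hf : IsPairing f U) (hvU : v ∉ U) : (phi 𝓐 U v f 𝓑).card = 𝓑.card := by
  have hdisj : Disjoint (𝓑 \ famM 𝓐 U v f 𝓑) ((famM 𝓐 U v f 𝓑).image (setUvf U v f)) :=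
    (Disjoint.mono_left sdiff_subset image_disj.symm)
  have hinj : Set.InjOn (setUvf U v f) (famM 𝓐 U v f 𝓑 : Set (Finset ℕ)) := by
    intro a ha b hb h
    exact setUvf_inj hf hvU (mem_famK (famM_subset_famK ha)).2.1
      (mem_famK (famM_subset_famK hb)).2.1 h
  rw [phi, card_union_of_disjoint hdisj, card_sdiff_of_subset famM_subset,
    card_image_of_injOn hinj, Nat.sub_add_cancel (card_le_card famM_subset)]

lemma key (hf : IsPairing f U) (hvU : v ∉ U) {𝓑 𝓑' : Finset (Finset ℕ)} (h𝓑A : 𝓑 ⊆ 𝓐) (h𝓑A' : 𝓑' ⊆ 𝓐)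
    (hint' : IsIntersecting 𝓑') (hEq : phi 𝓐 U v f 𝓑 = phi 𝓐 U v f 𝓑') :
    (famM 𝓐 U v f 𝓑).image (setUvf U v f) ⊆ (famM 𝓐 U v f 𝓑').image (setUvf U v f) := by
  classical
  set S' := (famK U v f 𝓑).filter
    (fun K => setUvf U v f K ∈ (famM 𝓐 U v f 𝓑').image (setUvf U v f)) with hS'
  have hclosed : Closed 𝓐 U v f 𝓑 S' := by
    constructor
    · intro K hK hKA
      have hKM : K ∈ famM 𝓐 U v f 𝓑 := famM_closed.1 K hK hKA
      have h1 : setUvf U v f K ∈ phi 𝓐 U v f 𝓑' := by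
        rw [← hEq]; exact mem_union_right _ (mem_image_of_mem _ hKM)
      rcases mem_union.1 h1 with h | h
      · exact absurd (h𝓑A' (mem_sdiff.1 h).1) hKA
      · exact mem_filter.2 ⟨hK, h⟩
    · rintro K' hK' ⟨K, hKS', hdisj⟩
      obtain ⟨hKfamK, hKim⟩ := mem_filter.1 hKS'
      obtain ⟨hKB, hKv, _⟩ := mem_famK hKfamK
      obtain ⟨hK'B, hK'v, hK'C⟩ := mem_famK hK'
      obtain ⟨K₁, hK₁, hK₁eq⟩ := mem_image.1 hKim
      have hK₁v : v ∉ K₁ := (mem_famK (famM_subset_famK hK₁)).2.1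
      have hKM' : K ∈ famM 𝓐 U v f 𝓑' := by
        rwa [setUvf_inj hf hvU hK₁v hKv hK₁eq] at hK₁
      have hKB' : K ∈ 𝓑' := famM_subset hKM'
      have hCK'B' : setUvf U v f K' ∉ 𝓑' := by
        intro hmem
        have h1 : (setUvf U v f K' ∩ K).Nonempty := hint' _ hmem _ hKB'
        have h2 : (K ∩ setUvf U v f K').Nonempty := by rwa [inter_comm] at h1
        have h3 := inter_setUvf hf hKv hK'v h2
        rw [hdisj] at h3; exact Finset.not_nonempty_empty h3
      have hK'M : K' ∈ famM 𝓐 U v f 𝓑 := by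
        by_contra hn
        have h1 : K' ∈ phi 𝓐 U v f 𝓑' := by
          rw [← hEq]; exact mem_union_left _ (mem_sdiff.2 ⟨mem_famK hK' |>.1, hn⟩)
        rcases mem_union.1 h1 with h | h
        · obtain ⟨hK'B', hK'M'⟩ := mem_sdiff.1 h
          have hK'K' : K' ∈ famK U v f 𝓑' := mem_filter.2 ⟨hK'B', hK'v, hCK'B'⟩
          exact hK'M' (famM_closed.2 K' hK'K' ⟨K, hKM', hdisj⟩)
        · obtain ⟨K₂, hK₂, hK₂eq⟩ := mem_image.1 h
          exact hK'v (hK₂eq ▸ v_mem_setUvf (mem_famK (famM_subset_famK hK₂)).2.1)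
      have h1 : setUvf U v f K' ∈ phi 𝓐 U v f 𝓑' := by
        rw [← hEq]; exact mem_union_right _ (mem_image_of_mem _ hK'M)
      rcases mem_union.1 h1 with h | h
      · exact absurd (mem_sdiff.1 h).1 hCK'B'
      · exact mem_filter.2 ⟨hK', h⟩
  have hmin := famM_min (filter_subset _ _) hclosed
  intro X hX
  obtain ⟨K, hK, rfl⟩ := mem_image.1 hX
  exact (mem_filter.1 (hmin hK)).2

lemma recon (hf : IsPairing f U) (hvU : v ∉ U) :
    𝓑 = (phi 𝓐 U v f 𝓑 \ (famM 𝓐 U v f 𝓑).image (setUvf U v f)) ∪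
      ((famM 𝓐 U v f 𝓑).image (setUvf U v f)).image (decomp U v f) := by
  have hMv : ∀ K ∈ famM 𝓐 U v f 𝓑, v ∉ K :=
    fun K hK => (mem_famK (famM_subset_famK hK)).2.1
  have h1 : ((famM 𝓐 U v f 𝓑).image (setUvf U v f)).image (decomp U v f)
      = famM 𝓐 U v f 𝓑 := by
    rw [Finset.image_image]
    have he : Set.EqOn (decomp U v f ∘ setUvf U v f) id
        (famM 𝓐 U v f 𝓑 : Set (Finset ℕ)) :=
      fun K hK => decomp_setUvf hf hvU (hMv K hK)
    rw [Finset.image_congr he, Finset.image_id]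
  have h2 : phi 𝓐 U v f 𝓑 \ (famM 𝓐 U v f 𝓑).image (setUvf U v f) = 𝓑 \ famM 𝓐 U v f 𝓑 := by
    ext X
    simp only [phi, mem_sdiff, mem_union]
    constructor
    · rintro ⟨⟨h1', h2'⟩ | h1', h3'⟩
      · exact ⟨h1', h2'⟩
      · exact absurd h1' h3'
    · rintro ⟨hXB, hXM⟩
      refine ⟨Or.inl ⟨hXB, hXM⟩, fun h => ?_⟩
      exact (disjoint_left.1 image_disj) h hXB
  rw [h2, h1, sdiff_union_of_subset famM_subset]

end main

end UvfAux


theorem stmt7 (n : ℕ) (𝓐 : Finset (Finset ℕ)) (h𝓐 : 𝓐 ⊆ (Finset.Icc 1 n).powerset)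
    (U : Finset ℕ) (hU : U ⊆ Finset.Icc 1 n) (hUeven : Even U.card)
    (v : ℕ) (hv : v ∈ Finset.Icc 1 n) (hvU : v ∉ U)
    (f : ℕ → ℕ) (hf : IsPairing f U) :
    ∃ φ : Finset (Finset ℕ) → Finset (Finset ℕ),
      Set.InjOn φ ↑(𝓐.powerset.filter IsIntersecting) ∧
      ∀ 𝓑 ∈ 𝓐.powerset.filter IsIntersecting,
        φ 𝓑 ∈ (famUvf U v f 𝓐).powerset.filter IsIntersecting ∧
        (φ 𝓑).card = 𝓑.card := by
  refine ⟨UvfAux.phi 𝓐 U v f, ?_, ?_⟩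
  · intro 𝓑 h𝓑 𝓑' h𝓑' hEq
    rw [Finset.mem_coe, mem_filter, mem_powerset] at h𝓑 h𝓑'
    obtain ⟨h1, h2⟩ := h𝓑
    obtain ⟨h1', h2'⟩ := h𝓑'
    have hsub := UvfAux.key hf hvU h1 h1' h2' hEq
    have hsub' := UvfAux.key hf hvU h1' h1 h2 hEq.symm
    have himg : (UvfAux.famM 𝓐 U v f 𝓑).image (setUvf U v f)
        = (UvfAux.famM 𝓐 U v f 𝓑').image (setUvf U v f) := subset_antisymm hsub hsub'
    calc 𝓑 = _ := UvfAux.recon hf hvU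
      _ = _ := by rw [hEq, himg]
      _ = 𝓑' := (UvfAux.recon hf hvU).symm
  · intro 𝓑 h𝓑
    rw [mem_filter, mem_powerset] at h𝓑
    obtain ⟨h1, h2⟩ := h𝓑
    exact ⟨mem_filter.2 ⟨mem_powerset.2 (UvfAux.phi_subset h1), UvfAux.phi_int hf h2⟩,
      UvfAux.phi_card hf hvU⟩
end

section
/- Let $\mathcal{A} \subseteq \mathcal{P}[n]$, let $U \subseteq [n]$ have even order, let $v \in [n] - U$, and let $f : U \to U$ be a pairing function. Then for every nonnegative integer $m$, the number of intersecting subfamilies of $\mathcal{C}_{U,v,f}(\mathcal{A})$ of order $m$ is at least the number of intersecting subfamilies of $\mathcal{A}$ of order $m$. -/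
open Finset

namespace Stmt8Aux

lemma v_mem_setUvf (U : Finset ℕ) (v : ℕ) (f : ℕ → ℕ) (A : Finset ℕ) :
    v ∈ setUvf U v f A := by
  unfold setUvf
  split
  · assumption
  · simp

lemma setUvf_of_not_mem (U : Finset ℕ) (v : ℕ) (f : ℕ → ℕ) {A : Finset ℕ} (h : v ∉ A) :
    setUvf U v f A = (A ∩ U).image f ∪ {v} ∪ (A \ U) := if_neg h

variable {U : Finset ℕ} {v : ℕ} {f : ℕ → ℕ} {𝓐 : Finset (Finset ℕ)}

/-- Key lemma: for `v`-free sets, `C(X) ∩ B ≠ ∅` implies `X ∩ C(B) ≠ ∅`. -/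
lemma key (hfU : ∀ x ∈ U, f x ∈ U) (hff : ∀ x ∈ U, f (f x) = x)
    {X B : Finset ℕ} (hX : v ∉ X) (hB : v ∉ B)
    (h : (setUvf U v f X ∩ B).Nonempty) : (X ∩ setUvf U v f B).Nonempty := by
  rw [setUvf_of_not_mem U v f hX] at h
  rw [setUvf_of_not_mem U v f hB]
  obtain ⟨b, hb⟩ := h
  rw [mem_inter] at hb
  obtain ⟨hb1, hb2⟩ := hb
  rcases mem_union.1 hb1 with hb1 | hb1
  · rcases mem_union.1 hb1 with hb1 | hb1
    · -- b ∈ image f (X ∩ U)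
      obtain ⟨x, hx, hfx⟩ := mem_image.1 hb1
      rw [mem_inter] at hx
      have hbU : b ∈ U := hfx ▸ hfU x hx.2
      have : f b ∈ (B ∩ U).image f := mem_image_of_mem f (mem_inter.2 ⟨hb2, hbU⟩)
      have hfb : f b = x := by rw [← hfx, hff x hx.2]
      exact ⟨x, mem_inter.2 ⟨hx.1, mem_union.2 (Or.inl (mem_union.2 (Or.inl (hfb ▸ this))))⟩⟩
    · -- b = v
      rw [mem_singleton] at hb1
      exact absurd (hb1 ▸ hb2) hB
  · -- b ∈ X \ U
    rw [mem_sdiff] at hb1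
    exact ⟨b, mem_inter.2 ⟨hb1.1, mem_union.2 (Or.inr (mem_sdiff.2 ⟨hb2, hb1.2⟩))⟩⟩

/-- `setUvf` is injective on `v`-free sets. -/
lemma setUvf_inj (hfU : ∀ x ∈ U, f x ∈ U) (hff : ∀ x ∈ U, f (f x) = x) (hvU : v ∉ U)
    {X Y : Finset ℕ} (hX : v ∉ X) (hY : v ∉ Y)
    (h : setUvf U v f X = setUvf U v f Y) : X = Y := by
  have rec1 : ∀ (A : Finset ℕ), v ∉ A → (setUvf U v f A ∩ U).image f = A ∩ U := by
    intro A hA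
    have h1 : setUvf U v f A ∩ U = (A ∩ U).image f := by
      rw [setUvf_of_not_mem U v f hA]
      ext x
      simp only [mem_inter, mem_union, mem_image, mem_singleton, mem_sdiff]
      constructor
      · rintro ⟨(⟨y, hy, rfl⟩ | rfl) | ⟨_, hxu⟩, hxU⟩
        · exact ⟨y, hy, rfl⟩
        · exact absurd hxU hvU
        · exact absurd hxU hxu
      · rintro ⟨y, hy, rfl⟩
        exact ⟨Or.inl (Or.inl ⟨y, hy, rfl⟩), hfU y hy.2⟩
    rw [h1, image_image]
    refine (image_congr ?_).trans image_id
    intro x hx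
    exact hff x (mem_inter.1 hx).2
  have rec2 : ∀ (A : Finset ℕ), v ∉ A → setUvf U v f A \ insert v U = A \ U := by
    intro A hA
    rw [setUvf_of_not_mem U v f hA]
    ext x
    simp only [mem_sdiff, mem_union, mem_insert, mem_image, mem_singleton, mem_inter]
    constructor
    · rintro ⟨(⟨y, hy, rfl⟩ | rfl) | ⟨hxA, hxU⟩, hn⟩
      · exact absurd (Or.inr (hfU y hy.2)) hn
      · exact absurd (Or.inl rfl) hn
      · exact ⟨hxA, hxU⟩
    · rintro ⟨hxA, hxU⟩
      refine ⟨Or.inr ⟨hxA, hxU⟩, ?_⟩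
      rintro (rfl | hxU')
      · exact hA hxA
      · exact hxU hxU'
  have e1 : X ∩ U = Y ∩ U := by rw [← rec1 X hX, ← rec1 Y hY, h]
  have e2 : X \ U = Y \ U := by rw [← rec2 X hX, ← rec2 Y hY, h]
  have e3 : X \ U ∪ X ∩ U = Y \ U ∪ Y ∩ U := by rw [e1, e2]
  rwa [sdiff_union_inter, sdiff_union_inter] at e3

lemma mem_famUvf_image {A : Finset ℕ} (hA : A ∈ 𝓐) : setUvf U v f A ∈ famUvf U v f 𝓐 :=
  mem_union.2 (Or.inl (mem_image_of_mem _ hA))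

lemma mem_famUvf_of_v_mem {A : Finset ℕ} (hA : A ∈ 𝓐) (hv : v ∈ A) : A ∈ famUvf U v f 𝓐 := by
  have := mem_famUvf_image (U := U) (v := v) (f := f) hA
  rwa [setUvf, if_pos hv] at this

lemma mem_famUvf_filter {A : Finset ℕ} (hA : A ∈ 𝓐) (hA' : setUvf U v f A ∈ 𝓐) :
    A ∈ famUvf U v f 𝓐 :=
  mem_union.2 (Or.inr (mem_filter.2 ⟨hA, hA'⟩))

/-- One step of the forced-compression closure operator. -/
def Op (U : Finset ℕ) (v : ℕ) (f : ℕ → ℕ) (𝓐 𝓑 F : Finset (Finset ℕ)) :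
    Finset (Finset ℕ) :=
  𝓑.filter (fun A => v ∉ A ∧ (A ∉ famUvf U v f 𝓐 ∨ ∃ X ∈ F, A ∩ setUvf U v f X = ∅))

/-- Iterates of the closure operator. -/
def Fit (U : Finset ℕ) (v : ℕ) (f : ℕ → ℕ) (𝓐 𝓑 : Finset (Finset ℕ)) :
    ℕ → Finset (Finset ℕ)
  | 0 => ∅
  | k + 1 => Op U v f 𝓐 𝓑 (Fit U v f 𝓐 𝓑 k)

/-- The least fixpoint. -/
def Fstar (U : Finset ℕ) (v : ℕ) (f : ℕ → ℕ) (𝓐 𝓑 : Finset (Finset ℕ)) :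
    Finset (Finset ℕ) := Fit U v f 𝓐 𝓑 (𝓑.card + 1)

/-- The injection on subfamilies. -/
def Phi (U : Finset ℕ) (v : ℕ) (f : ℕ → ℕ) (𝓐 𝓑 : Finset (Finset ℕ)) :
    Finset (Finset ℕ) :=
  (𝓑 \ Fstar U v f 𝓐 𝓑) ∪ (Fstar U v f 𝓐 𝓑).image (setUvf U v f)

lemma Op_subset (𝓑 F : Finset (Finset ℕ)) : Op U v f 𝓐 𝓑 F ⊆ 𝓑 := filter_subset _ _

lemma Op_mono {𝓑 F F' : Finset (Finset ℕ)} (h : F ⊆ F') :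
    Op U v f 𝓐 𝓑 F ⊆ Op U v f 𝓐 𝓑 F' := by
  intro A hA
  rw [Op, mem_filter] at hA ⊢
  obtain ⟨h1, h2, h3⟩ := hA
  refine ⟨h1, h2, ?_⟩
  rcases h3 with h3 | ⟨X, hX, hX2⟩
  · exact Or.inl h3
  · exact Or.inr ⟨X, h hX, hX2⟩

lemma Fit_subset (𝓑 : Finset (Finset ℕ)) (k : ℕ) : Fit U v f 𝓐 𝓑 k ⊆ 𝓑 := by
  cases k with
  | zero => exact empty_subset _
  | succ k => exact Op_subset _ _

lemma Fit_mono_succ (𝓑 : Finset (Finset ℕ)) (k : ℕ) :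
    Fit U v f 𝓐 𝓑 k ⊆ Fit U v f 𝓐 𝓑 (k + 1) := by
  induction k with
  | zero => exact empty_subset _
  | succ k ih => exact Op_mono ih

lemma Fit_mono (𝓑 : Finset (Finset ℕ)) {k l : ℕ} (h : k ≤ l) :
    Fit U v f 𝓐 𝓑 k ⊆ Fit U v f 𝓐 𝓑 l := by
  induction l with
  | zero => simp_all
  | succ l ih =>
    rcases Nat.lt_or_ge k (l + 1) with h' | h'
    · exact (ih (Nat.lt_succ_iff.1 h')).trans (Fit_mono_succ 𝓑 l)
    · have : k = l + 1 := le_antisymm h h'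
      subst this; exact Subset.rfl

lemma Fit_stab (𝓑 : Finset (Finset ℕ)) {k : ℕ}
    (h : Fit U v f 𝓐 𝓑 k = Fit U v f 𝓐 𝓑 (k + 1)) :
    ∀ l, k ≤ l → Fit U v f 𝓐 𝓑 l = Fit U v f 𝓐 𝓑 k := by
  intro l hl
  induction l with
  | zero => simp_all
  | succ l ih =>
    rcases Nat.lt_or_ge k (l + 1) with h' | h'
    · have hl' := Nat.lt_succ_iff.1 h'
      show Op U v f 𝓐 𝓑 (Fit U v f 𝓐 𝓑 l) = _
      rw [ih hl']
      exact h.symm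
    · exact (le_antisymm hl h') ▸ rfl

lemma exists_fix (𝓑 : Finset (Finset ℕ)) :
    ∃ k ≤ 𝓑.card, Fit U v f 𝓐 𝓑 k = Fit U v f 𝓐 𝓑 (k + 1) := by
  by_contra hcon
  push_neg at hcon
  have claim : ∀ k, k ≤ 𝓑.card + 1 → k ≤ (Fit U v f 𝓐 𝓑 k).card := by
    intro k
    induction k with
    | zero => intro _; exact Nat.zero_le _
    | succ k ih =>
      intro hk
      have hk' : k ≤ 𝓑.card := Nat.lt_succ_iff.1 hk
      have hne := hcon k hk'
      have hss : Fit U v f 𝓐 𝓑 k ⊂ Fit U v f 𝓐 𝓑 (k + 1) :=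
        Finset.ssubset_iff_subset_ne.2 ⟨Fit_mono_succ 𝓑 k, hne⟩
      have := card_lt_card hss
      have := ih (by omega)
      omega
  have h1 := claim (𝓑.card + 1) le_rfl
  have h2 : (Fit U v f 𝓐 𝓑 (𝓑.card + 1)).card ≤ 𝓑.card := card_le_card (Fit_subset 𝓑 _)
  omega

lemma Fstar_fixed (𝓑 : Finset (Finset ℕ)) :
    Op U v f 𝓐 𝓑 (Fstar U v f 𝓐 𝓑) = Fstar U v f 𝓐 𝓑 := by
  obtain ⟨k, hk, heq⟩ := exists_fix (U := U) (v := v) (f := f) (𝓐 := 𝓐) 𝓑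
  have h1 := Fit_stab 𝓑 heq (𝓑.card + 1) (by omega)
  have h2 := Fit_stab 𝓑 heq (𝓑.card + 2) (by omega)
  show Fit U v f 𝓐 𝓑 (𝓑.card + 2) = Fit U v f 𝓐 𝓑 (𝓑.card + 1)
  rw [h1, h2]

lemma Fit_subset_Fstar (𝓑 : Finset (Finset ℕ)) (l : ℕ) :
    Fit U v f 𝓐 𝓑 l ⊆ Fstar U v f 𝓐 𝓑 := by
  obtain ⟨k, hk, heq⟩ := exists_fix (U := U) (v := v) (f := f) (𝓐 := 𝓐) 𝓑
  rcases le_or_gt l (𝓑.card + 1) with h | h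
  · exact Fit_mono 𝓑 h
  · have h1 := Fit_stab 𝓑 heq l (by omega)
    have h2 := Fit_stab 𝓑 heq (𝓑.card + 1) (by omega)
    rw [Fstar, h1, h2]

lemma Fstar_subset (𝓑 : Finset (Finset ℕ)) : Fstar U v f 𝓐 𝓑 ⊆ 𝓑 := Fit_subset 𝓑 _

lemma vfree_of_mem_Fstar {𝓑 : Finset (Finset ℕ)} {X : Finset ℕ}
    (hX : X ∈ Fstar U v f 𝓐 𝓑) : v ∉ X := by
  rw [← Fstar_fixed 𝓑, Op, mem_filter] at hX
  exact hX.2.1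

/-- Cross-family lemma: if `Phi 𝓑₁ = Phi 𝓑₂` then no compression of a member of the
closure of `𝓑₂` lies in `𝓑₁`. -/
lemma cross (hfU : ∀ x ∈ U, f x ∈ U) (hff : ∀ x ∈ U, f (f x) = x) (hvU : v ∉ U)
    {𝓑₁ 𝓑₂ : Finset (Finset ℕ)} (h1A : 𝓑₁ ⊆ 𝓐) (h2A : 𝓑₂ ⊆ 𝓐)
    (hint : IsIntersecting 𝓑₁) (hPhi : Phi U v f 𝓐 𝓑₁ = Phi U v f 𝓐 𝓑₂) :
    ∀ k, ∀ X ∈ Fit U v f 𝓐 𝓑₂ k, setUvf U v f X ∉ 𝓑₁ := by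
  intro k
  induction k with
  | zero => intro X hX; simp [Fit] at hX
  | succ k ih =>
    intro X hX hcX
    rw [Fit, Op, mem_filter] at hX
    obtain ⟨hX𝓑, hvX, hcase⟩ := hX
    rcases hcase with hcase | ⟨X', hX'mem, hdisj⟩
    · exact hcase (mem_famUvf_filter (h2A hX𝓑) (h1A hcX))
    · have hX'star : X' ∈ Fstar U v f 𝓐 𝓑₂ := Fit_subset_Fstar 𝓑₂ k hX'mem
      have hvX' : v ∉ X' := vfree_of_mem_Fstar hX'star
      -- from X ∩ C(X') = ∅ deduce C(X) ∩ X' = ∅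
      have hd2 : setUvf U v f X ∩ X' = ∅ := by
        rw [← not_nonempty_iff_eq_empty]
        intro hne
        have := key hfU hff hvX hvX' hne
        rw [hdisj] at this
        exact absurd this (by simp)
      have hcX' : setUvf U v f X' ∈ Phi U v f 𝓐 𝓑₁ := by
        rw [hPhi, Phi]
        exact mem_union.2 (Or.inr (mem_image_of_mem _ hX'star))
      rw [Phi, mem_union] at hcX'
      rcases hcX' with hcX' | hcX'
      · exact ih X' hX'mem (mem_sdiff.1 hcX').1
      · obtain ⟨Y, hY, hYe⟩ := mem_image.1 hcX'
        have : X' = Y := setUvf_inj hfU hff hvU hvX' (vfree_of_mem_Fstar hY) hYe.symm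
        subst this
        have hX'𝓑₁ : X' ∈ 𝓑₁ := Fstar_subset 𝓑₁ hY
        have := hint _ hcX _ hX'𝓑₁
        rw [hd2] at this
        exact absurd this (by simp)

lemma Fstar_not_mem (hfU : ∀ x ∈ U, f x ∈ U) (hff : ∀ x ∈ U, f (f x) = x) (hvU : v ∉ U)
    {𝓑 : Finset (Finset ℕ)} (h𝓑A : 𝓑 ⊆ 𝓐) (hint : IsIntersecting 𝓑)
    {X : Finset ℕ} (hX : X ∈ Fstar U v f 𝓐 𝓑) : setUvf U v f X ∉ 𝓑 :=
  cross hfU hff hvU h𝓑A h𝓑A hint rfl _ X hX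

lemma kept {𝓑 : Finset (Finset ℕ)} {A : Finset ℕ} (hA : A ∈ 𝓑) (hvA : v ∉ A)
    (hA' : A ∉ Fstar U v f 𝓐 𝓑) :
    A ∈ famUvf U v f 𝓐 ∧ ∀ X ∈ Fstar U v f 𝓐 𝓑, (A ∩ setUvf U v f X).Nonempty := by
  rw [← Fstar_fixed 𝓑, Op, mem_filter] at hA'
  push_neg at hA'
  obtain ⟨h1, h2⟩ := hA' hA hvA
  refine ⟨h1, fun X hX => ?_⟩
  rw [nonempty_iff_ne_empty]
  exact nonempty_iff_ne_empty.1 (h2 X hX)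

lemma Phi_subset {𝓑 : Finset (Finset ℕ)} (h𝓑A : 𝓑 ⊆ 𝓐) :
    Phi U v f 𝓐 𝓑 ⊆ famUvf U v f 𝓐 := by
  intro A hA
  rw [Phi, mem_union] at hA
  rcases hA with hA | hA
  · rw [mem_sdiff] at hA
    by_cases hv : v ∈ A
    · exact mem_famUvf_of_v_mem (h𝓑A hA.1) hv
    · exact (kept hA.1 hv hA.2).1
  · obtain ⟨X, hX, rfl⟩ := mem_image.1 hA
    exact mem_famUvf_image (h𝓑A (Fstar_subset 𝓑 hX))

lemma Phi_disjoint (hfU : ∀ x ∈ U, f x ∈ U) (hff : ∀ x ∈ U, f (f x) = x) (hvU : v ∉ U)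
    {𝓑 : Finset (Finset ℕ)} (h𝓑A : 𝓑 ⊆ 𝓐) (hint : IsIntersecting 𝓑) :
    Disjoint (𝓑 \ Fstar U v f 𝓐 𝓑) ((Fstar U v f 𝓐 𝓑).image (setUvf U v f)) := by
  rw [disjoint_right]
  intro A hA hA'
  obtain ⟨X, hX, rfl⟩ := mem_image.1 hA
  exact Fstar_not_mem hfU hff hvU h𝓑A hint hX (mem_sdiff.1 hA').1

lemma Phi_card (hfU : ∀ x ∈ U, f x ∈ U) (hff : ∀ x ∈ U, f (f x) = x) (hvU : v ∉ U)
    {𝓑 : Finset (Finset ℕ)} (h𝓑A : 𝓑 ⊆ 𝓐) (hint : IsIntersecting 𝓑) :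
    (Phi U v f 𝓐 𝓑).card = 𝓑.card := by
  rw [Phi, card_union_of_disjoint (Phi_disjoint hfU hff hvU h𝓑A hint),
    card_image_of_injOn (fun X hX Y hY h =>
      setUvf_inj hfU hff hvU (vfree_of_mem_Fstar hX) (vfree_of_mem_Fstar hY) h),
    card_sdiff_of_subset (Fstar_subset 𝓑)]
  have := card_le_card (Fstar_subset (U := U) (v := v) (f := f) (𝓐 := 𝓐) 𝓑)
  omega

lemma Phi_inter {𝓑 : Finset (Finset ℕ)} (hint : IsIntersecting 𝓑) :
    IsIntersecting (Phi U v f 𝓐 𝓑) := by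
  intro A hA B hB
  rw [Phi, mem_union] at hA hB
  rcases hA with hA | hA <;> rcases hB with hB | hB
  · exact hint _ (mem_sdiff.1 hA).1 _ (mem_sdiff.1 hB).1
  · obtain ⟨X, hX, rfl⟩ := mem_image.1 hB
    rw [mem_sdiff] at hA
    by_cases hv : v ∈ A
    · exact ⟨v, mem_inter.2 ⟨hv, v_mem_setUvf U v f X⟩⟩
    · exact (kept hA.1 hv hA.2).2 X hX
  · obtain ⟨X, hX, rfl⟩ := mem_image.1 hA
    rw [mem_sdiff] at hB
    by_cases hv : v ∈ B
    · exact ⟨v, mem_inter.2 ⟨v_mem_setUvf U v f X, hv⟩⟩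
    · obtain ⟨x, hx⟩ := (kept hB.1 hv hB.2).2 X hX
      rw [mem_inter] at hx
      exact ⟨x, mem_inter.2 ⟨hx.2, hx.1⟩⟩
  · obtain ⟨X, _, rfl⟩ := mem_image.1 hA
    obtain ⟨Y, _, rfl⟩ := mem_image.1 hB
    exact ⟨v, mem_inter.2 ⟨v_mem_setUvf U v f X, v_mem_setUvf U v f Y⟩⟩

lemma Phi_inj (hfU : ∀ x ∈ U, f x ∈ U) (hff : ∀ x ∈ U, f (f x) = x) (hvU : v ∉ U)
    {𝓑₁ 𝓑₂ : Finset (Finset ℕ)} (h1A : 𝓑₁ ⊆ 𝓐) (h2A : 𝓑₂ ⊆ 𝓐)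
    (hint1 : IsIntersecting 𝓑₁) (hint2 : IsIntersecting 𝓑₂)
    (h : Phi U v f 𝓐 𝓑₁ = Phi U v f 𝓐 𝓑₂) : 𝓑₁ = 𝓑₂ := by
  have hstep : ∀ 𝓒₁ 𝓒₂ : Finset (Finset ℕ), 𝓒₁ ⊆ 𝓐 → 𝓒₂ ⊆ 𝓐 →
      IsIntersecting 𝓒₁ → Phi U v f 𝓐 𝓒₁ = Phi U v f 𝓐 𝓒₂ →
      Fstar U v f 𝓐 𝓒₂ ⊆ Fstar U v f 𝓐 𝓒₁ := by
    intro 𝓒₁ 𝓒₂ hC1 hC2 hi1 hPhi X hX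
    have hcX : setUvf U v f X ∈ Phi U v f 𝓐 𝓒₁ := by
      rw [hPhi, Phi]
      exact mem_union.2 (Or.inr (mem_image_of_mem _ hX))
    rw [Phi, mem_union] at hcX
    rcases hcX with hcX | hcX
    · exact absurd (mem_sdiff.1 hcX).1 (cross hfU hff hvU hC1 hC2 hi1 hPhi _ X hX)
    · obtain ⟨Y, hY, hYe⟩ := mem_image.1 hcX
      have : Y = X := setUvf_inj hfU hff hvU (vfree_of_mem_Fstar hY)
        (vfree_of_mem_Fstar hX) hYe
      exact this ▸ hY
  have hF : Fstar U v f 𝓐 𝓑₁ = Fstar U v f 𝓐 𝓑₂ :=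
    Subset.antisymm (hstep 𝓑₂ 𝓑₁ h2A h1A hint2 h.symm) (hstep 𝓑₁ 𝓑₂ h1A h2A hint1 h)
  have hrec : ∀ 𝓒 : Finset (Finset ℕ), 𝓒 ⊆ 𝓐 → IsIntersecting 𝓒 →
      𝓒 \ Fstar U v f 𝓐 𝓒 =
        Phi U v f 𝓐 𝓒 \ (Fstar U v f 𝓐 𝓒).image (setUvf U v f) := by
    intro 𝓒 hC hiC
    rw [Phi, union_sdiff_distrib, sdiff_eq_self_of_disjoint (Phi_disjoint hfU hff hvU hC hiC),
      sdiff_self, bot_eq_empty, union_empty]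
  have h2 : 𝓑₁ \ Fstar U v f 𝓐 𝓑₁ = 𝓑₂ \ Fstar U v f 𝓐 𝓑₂ := by
    rw [hrec 𝓑₁ h1A hint1, hrec 𝓑₂ h2A hint2, h, hF]
  calc 𝓑₁ = 𝓑₁ \ Fstar U v f 𝓐 𝓑₁ ∪ Fstar U v f 𝓐 𝓑₁ :=
        (sdiff_union_of_subset (Fstar_subset 𝓑₁)).symm
    _ = 𝓑₂ \ Fstar U v f 𝓐 𝓑₂ ∪ Fstar U v f 𝓐 𝓑₂ := by rw [h2, hF]
    _ = 𝓑₂ := sdiff_union_of_subset (Fstar_subset 𝓑₂)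

end Stmt8Aux

theorem stmt8 (n : ℕ) (𝓐 : Finset (Finset ℕ)) (h𝓐 : 𝓐 ⊆ (Finset.Icc 1 n).powerset)
    (U : Finset ℕ) (hU : U ⊆ Finset.Icc 1 n) (hUeven : Even U.card)
    (v : ℕ) (hv : v ∈ Finset.Icc 1 n) (hvU : v ∉ U)
    (f : ℕ → ℕ) (hf : IsPairing f U) (m : ℕ) :
    numInter 𝓐 m ≤ numInter (famUvf U v f 𝓐) m := by
  obtain ⟨hfU, hff, -⟩ := hf
  apply Finset.card_le_card_of_injOn (Stmt8Aux.Phi U v f 𝓐)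
  · intro 𝓑 h𝓑
    rw [Finset.mem_coe, mem_filter] at h𝓑 ⊢
    obtain ⟨h1, h3⟩ := h𝓑
    rw [mem_filter, mem_powerset] at h1
    obtain ⟨hsub, hint⟩ := h1
    refine ⟨mem_filter.2 ⟨mem_powerset.2 (Stmt8Aux.Phi_subset hsub),
      Stmt8Aux.Phi_inter hint⟩, ?_⟩
    rw [Stmt8Aux.Phi_card hfU hff hvU hsub hint, h3]
  · intro 𝓑₁ hm1 𝓑₂ hm2 he
    simp only [Finset.mem_coe, mem_filter, mem_powerset] at hm1 hm2
    exact Stmt8Aux.Phi_inj hfU hff hvU hm1.1.1 hm2.1.1 hm1.1.2 hm2.1.2 he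
end

section
/- Let $\mathcal{A} \subseteq \mathcal{P}[n]$, let $U \subseteq [n]$ have even order, let $v \in [n] - U$, let $f : U \to U$ be a pairing function, and let $p \in (0,1)$. Then $\mathbb{P}((\mathcal{C}_{U,v,f}\mathcal{A})_p \text{ is intersecting}) \ge \mathbb{P}(\mathcal{A}_p \text{ is intersecting})$; that is, $\sum_{\mathcal{B} \subseteq \mathcal{C}_{U,v,f}\mathcal{A},\ \mathcal{B} \text{ intersecting}} p^{|\mathcal{B}|}(1-p)^{|\mathcal{C}_{U,v,f}\mathcal{A}|-|\mathcal{B}|} \ge \sum_{\mathcal{B} \subseteq \mathcal{A},\ \mathcal{B} \text{ intersecting}} p^{|\mathcal{B}|}(1-p)^{|\mathcal{A}|-|\mathcal{B}|}$. -/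
open Finset

namespace S9

variable {U : Finset ℕ} {v : ℕ} {f : ℕ → ℕ}

lemma setUvf_of_mem {A : Finset ℕ} (h : v ∈ A) : setUvf U v f A = A := if_pos h

lemma mem_setUvf_iff {A : Finset ℕ} (h : v ∉ A) {x : ℕ} :
    x ∈ setUvf U v f A ↔ (∃ y, y ∈ A ∧ y ∈ U ∧ f y = x) ∨ x = v ∨ (x ∈ A ∧ x ∉ U) := by
  rw [setUvf, if_neg h]
  simp only [mem_union, mem_image, mem_inter, mem_singleton, mem_sdiff, and_assoc, or_assoc]

lemma v_mem_setUvf {A : Finset ℕ} : v ∈ setUvf U v f A := by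
  by_cases h : v ∈ A
  · rw [setUvf_of_mem h]; exact h
  · exact (mem_setUvf_iff h).mpr (Or.inr (Or.inl rfl))

lemma setUvf_subset (hf : IsPairing f U) (hvU : v ∉ U) {A B : Finset ℕ} (hA : v ∉ A)
    (hB : v ∉ B) (h : setUvf U v f A ⊆ setUvf U v f B) : A ⊆ B := by
  intro x hx
  by_cases hxU : x ∈ U
  · have h1 : f x ∈ setUvf U v f A := (mem_setUvf_iff hA).mpr (Or.inl ⟨x, hx, hxU, rfl⟩)
    rcases (mem_setUvf_iff hB).mp (h h1) with ⟨y, hyB, hyU, hyx⟩ | h2 | ⟨_, hfxU⟩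
    · have : x = y := by
        calc x = f (f x) := (hf.2.1 x hxU).symm
        _ = f (f y) := by rw [hyx]
        _ = y := hf.2.1 y hyU
      exact this ▸ hyB
    · exact absurd (h2 ▸ hf.1 x hxU) hvU
    · exact absurd (hf.1 x hxU) hfxU
  · have h1 : x ∈ setUvf U v f A := (mem_setUvf_iff hA).mpr (Or.inr (Or.inr ⟨hx, hxU⟩))
    rcases (mem_setUvf_iff hB).mp (h h1) with ⟨y, hyB, hyU, hyx⟩ | h2 | ⟨hxB, _⟩
    · exact absurd (hyx ▸ hf.1 y hyU) hxU
    · exact absurd (h2 ▸ hx) hA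
    · exact hxB

lemma setUvf_inj (hf : IsPairing f U) (hvU : v ∉ U) {A B : Finset ℕ} (hA : v ∉ A)
    (hB : v ∉ B) (h : setUvf U v f A = setUvf U v f B) : A = B :=
  Finset.Subset.antisymm (setUvf_subset hf hvU hA hB (by rw [h]))
    (setUvf_subset hf hvU hB hA (by rw [h]))

lemma sym_empty (hf : IsPairing f U) (hvU : v ∉ U) {A B : Finset ℕ} (hA : v ∉ A)
    (hB : v ∉ B) (h : A ∩ setUvf U v f B = ∅) : setUvf U v f A ∩ B = ∅ := by
  rw [Finset.eq_empty_iff_forall_notMem] at h ⊢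
  intro x hx
  rw [mem_inter] at hx
  obtain ⟨hx1, hx2⟩ := hx
  rcases (mem_setUvf_iff hA).mp hx1 with ⟨y, hyA, hyU, hyx⟩ | rfl | ⟨hxA, hxU⟩
  · have hxU : x ∈ U := hyx ▸ hf.1 y hyU
    have hy : y ∈ setUvf U v f B :=
      (mem_setUvf_iff hB).mpr (Or.inl ⟨x, hx2, hxU, by rw [← hyx, hf.2.1 y hyU]⟩)
    exact h y (mem_inter.mpr ⟨hyA, hy⟩)
  · exact hB hx2
  · exact h x (mem_inter.mpr ⟨hxA, (mem_setUvf_iff hB).mpr (Or.inr (Or.inr ⟨hx2, hxU⟩))⟩)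


inductive Bad (U : Finset ℕ) (v : ℕ) (f : ℕ → ℕ) (𝓐 𝓑 : Finset (Finset ℕ)) :
    Finset ℕ → Prop
  | base (A B : Finset ℕ) : A ∈ 𝓑 → v ∉ A → setUvf U v f A ∈ 𝓐 →
      B ∈ 𝓑 → v ∉ B → setUvf U v f B ∉ 𝓐 → A ∩ setUvf U v f B = ∅ → Bad U v f 𝓐 𝓑 A
  | step (A A' : Finset ℕ) : A ∈ 𝓑 → v ∉ A → setUvf U v f A ∈ 𝓐 →
      Bad U v f 𝓐 𝓑 A' → A ∩ setUvf U v f A' = ∅ → Bad U v f 𝓐 𝓑 A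

open scoped Classical in
noncomputable def hmap (U : Finset ℕ) (v : ℕ) (f : ℕ → ℕ) (𝓐 𝓑 : Finset (Finset ℕ))
    (A : Finset ℕ) : Finset ℕ :=
  if v ∉ A ∧ (Bad U v f 𝓐 𝓑 A ∨ setUvf U v f A ∉ 𝓐) then setUvf U v f A else A

noncomputable def phi (U : Finset ℕ) (v : ℕ) (f : ℕ → ℕ) (𝓐 𝓑 : Finset (Finset ℕ)) :
    Finset (Finset ℕ) :=
  𝓑.image (hmap U v f 𝓐 𝓑)

variable {U : Finset ℕ} {v : ℕ} {f : ℕ → ℕ} {𝓐 𝓑 𝓑₁ 𝓑₂ : Finset (Finset ℕ)}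

lemma Bad_mem {A : Finset ℕ} (h : Bad U v f 𝓐 𝓑 A) :
    A ∈ 𝓑 ∧ v ∉ A ∧ setUvf U v f A ∈ 𝓐 := by
  cases h with
  | base A B h1 h2 h3 _ _ _ _ => exact ⟨h1, h2, h3⟩
  | step A A' h1 h2 h3 _ _ => exact ⟨h1, h2, h3⟩

lemma lemA (hf : IsPairing f U) (hvU : v ∉ U) (hint : IsIntersecting 𝓑) {A : Finset ℕ}
    (hbad : Bad U v f 𝓐 𝓑 A) : setUvf U v f A ∉ 𝓑 := by
  intro hmem
  cases hbad with
  | base A B hA hvA hCA hB hvB hCB hd =>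
      exact (hint _ hmem _ hB).ne_empty (sym_empty hf hvU hvA hvB hd)
  | step A A' hA hvA hCA hbad' hd =>
      obtain ⟨hA'mem, hvA', _⟩ := Bad_mem hbad'
      exact (hint _ hmem _ hA'mem).ne_empty (sym_empty hf hvU hvA hvA' hd)

lemma hmap_mem_phi {A : Finset ℕ} (h : A ∈ 𝓑) : hmap U v f 𝓐 𝓑 A ∈ phi U v f 𝓐 𝓑 :=
  mem_image_of_mem _ h

lemma pull_vfree {X : Finset ℕ} (hvX : v ∉ X) (h : X ∈ phi U v f 𝓐 𝓑) :
    X ∈ 𝓑 ∧ ¬ Bad U v f 𝓐 𝓑 X ∧ setUvf U v f X ∈ 𝓐 := by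
  obtain ⟨A, hA, hh⟩ := mem_image.mp h
  by_cases hc : v ∉ A ∧ (Bad U v f 𝓐 𝓑 A ∨ setUvf U v f A ∉ 𝓐)
  · rw [hmap, if_pos hc] at hh
    exact absurd (hh ▸ (v_mem_setUvf : v ∈ setUvf U v f A)) hvX
  · rw [hmap, if_neg hc] at hh
    subst hh
    push_neg at hc
    obtain ⟨h1, h2⟩ := hc hvX
    exact ⟨hA, h1, h2⟩

lemma pull_C (hf : IsPairing f U) (hvU : v ∉ U) {B : Finset ℕ} (hvB : v ∉ B)
    (h : setUvf U v f B ∈ phi U v f 𝓐 𝓑) : B ∈ 𝓑 ∨ setUvf U v f B ∈ 𝓑 := by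
  obtain ⟨A, hA, hh⟩ := mem_image.mp h
  by_cases hc : v ∉ A ∧ (Bad U v f 𝓐 𝓑 A ∨ setUvf U v f A ∉ 𝓐)
  · rw [hmap, if_pos hc] at hh
    exact Or.inl ((setUvf_inj hf hvU hc.1 hvB hh) ▸ hA)
  · rw [hmap, if_neg hc] at hh
    exact Or.inr (hh ▸ hA)



lemma lemB (hf : IsPairing f U) (hvU : v ∉ U) (hsub₂ : 𝓑₂ ⊆ 𝓐) (hint₂ : IsIntersecting 𝓑₂)
    (heq : phi U v f 𝓐 𝓑₁ = phi U v f 𝓐 𝓑₂) {X : Finset ℕ}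
    (hbad : Bad U v f 𝓐 𝓑₁ X) : X ∉ 𝓑₂ → setUvf U v f X ∈ 𝓑₂ → False := by
  induction hbad with
  | base A B hA hvA hCA hB hvB hCB hd =>
      intro _ hCA2
      have hB1 : hmap U v f 𝓐 𝓑₁ B = setUvf U v f B := by
        rw [hmap, if_pos ⟨hvB, Or.inr hCB⟩]
      have hmem : setUvf U v f B ∈ phi U v f 𝓐 𝓑₂ := by
        rw [← heq, ← hB1]; exact hmap_mem_phi hB
      have hB2 : B ∈ 𝓑₂ := (pull_C hf hvU hvB hmem).resolve_right (fun h => hCB (hsub₂ h))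
      exact (hint₂ _ hCA2 _ hB2).ne_empty (sym_empty hf hvU hvA hvB hd)
  | step A A' hA hvA hCA hbad' hd ih =>
      intro _ hCA2
      obtain ⟨hA'1, hvA', hCA'⟩ := Bad_mem hbad'
      by_cases hA'2 : A' ∈ 𝓑₂
      · exact (hint₂ _ hCA2 _ hA'2).ne_empty (sym_empty hf hvU hvA hvA' hd)
      · have h1 : hmap U v f 𝓐 𝓑₁ A' = setUvf U v f A' := by
          rw [hmap, if_pos ⟨hvA', Or.inl hbad'⟩]
        have hmem : setUvf U v f A' ∈ phi U v f 𝓐 𝓑₂ := by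
          rw [← heq, ← h1]; exact hmap_mem_phi hA'1
        exact ih hA'2 ((pull_C hf hvU hvA' hmem).resolve_left hA'2)

lemma subset_of_phi_eq (hf : IsPairing f U) (hvU : v ∉ U) (hsub₁ : 𝓑₁ ⊆ 𝓐) (hsub₂ : 𝓑₂ ⊆ 𝓐)
    (hint₁ : IsIntersecting 𝓑₁) (hint₂ : IsIntersecting 𝓑₂)
    (heq : phi U v f 𝓐 𝓑₁ = phi U v f 𝓐 𝓑₂) : 𝓑₁ ⊆ 𝓑₂ := by
  intro X hX
  by_cases hvX : v ∈ X
  · have h1 : hmap U v f 𝓐 𝓑₁ X = X := by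
      rw [hmap, if_neg]; rintro ⟨h, _⟩; exact h hvX
    have hXphi : X ∈ phi U v f 𝓐 𝓑₂ := by rw [← heq, ← h1]; exact hmap_mem_phi hX
    obtain ⟨A₂, hA₂, hh⟩ := mem_image.mp hXphi
    by_cases hc : v ∉ A₂ ∧ (Bad U v f 𝓐 𝓑₂ A₂ ∨ setUvf U v f A₂ ∉ 𝓐)
    · rw [hmap, if_pos hc] at hh
      obtain ⟨hvA₂, hor⟩ := hc
      have hCAmem : setUvf U v f A₂ ∈ 𝓐 := by rw [hh]; exact hsub₁ hX
      have hCAB1 : setUvf U v f A₂ ∈ 𝓑₁ := by rw [hh]; exact hX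
      have hbad₂ : Bad U v f 𝓐 𝓑₂ A₂ := hor.resolve_right (fun hn => hn hCAmem)
      by_cases hA₂1 : A₂ ∈ 𝓑₁
      · by_cases hb1 : Bad U v f 𝓐 𝓑₁ A₂
        · exact absurd hCAB1 (lemA hf hvU hint₁ hb1)
        · have h2 : hmap U v f 𝓐 𝓑₁ A₂ = A₂ := by
            rw [hmap, if_neg]; rintro ⟨_, ho⟩
            exact ho.elim hb1 (fun hn => hn hCAmem)
          have hm : A₂ ∈ phi U v f 𝓐 𝓑₂ := by rw [← heq, ← h2]; exact hmap_mem_phi hA₂1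
          exact absurd hbad₂ (pull_vfree hvA₂ hm).2.1
      · exact absurd hCAB1 (fun hXX => lemB hf hvU hsub₁ hint₁ heq.symm hbad₂ hA₂1 hXX)
    · rw [hmap, if_neg hc] at hh
      rw [← hh]; exact hA₂
  · by_cases hc1 : Bad U v f 𝓐 𝓑₁ X ∨ setUvf U v f X ∉ 𝓐
    · have h1 : hmap U v f 𝓐 𝓑₁ X = setUvf U v f X := by rw [hmap, if_pos ⟨hvX, hc1⟩]
      have h2 : setUvf U v f X ∈ phi U v f 𝓐 𝓑₂ := by
        rw [← heq, ← h1]; exact hmap_mem_phi hX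
      rcases pull_C hf hvU hvX h2 with h | h
      · exact h
      · by_cases hX2 : X ∈ 𝓑₂
        · exact hX2
        · rcases hc1 with hb | hn
          · exact absurd h (fun hh2 => lemB hf hvU hsub₂ hint₂ heq hb hX2 hh2)
          · exact absurd (hsub₂ h) hn
    · have h1 : hmap U v f 𝓐 𝓑₁ X = X := by
        rw [hmap, if_neg]; rintro ⟨_, ho⟩; exact hc1 ho
      have hm : X ∈ phi U v f 𝓐 𝓑₂ := by rw [← heq, ← h1]; exact hmap_mem_phi hX
      exact (pull_vfree hvX hm).1

lemma phi_card (hf : IsPairing f U) (hvU : v ∉ U) (hsub : 𝓑 ⊆ 𝓐)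
    (hint : IsIntersecting 𝓑) : (phi U v f 𝓐 𝓑).card = 𝓑.card := by
  apply card_image_of_injOn
  intro A₁ h₁ A₂ h₂ he
  by_cases hc₁ : v ∉ A₁ ∧ (Bad U v f 𝓐 𝓑 A₁ ∨ setUvf U v f A₁ ∉ 𝓐)
  · by_cases hc₂ : v ∉ A₂ ∧ (Bad U v f 𝓐 𝓑 A₂ ∨ setUvf U v f A₂ ∉ 𝓐)
    · simp only [hmap] at he; rw [if_pos hc₁, if_pos hc₂] at he
      exact setUvf_inj hf hvU hc₁.1 hc₂.1 he
    · simp only [hmap] at he; rw [if_pos hc₁, if_neg hc₂] at he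
      exfalso
      rcases hc₁.2 with hb | hn
      · exact lemA hf hvU hint hb (he ▸ h₂)
      · exact hn (he ▸ hsub h₂)
  · by_cases hc₂ : v ∉ A₂ ∧ (Bad U v f 𝓐 𝓑 A₂ ∨ setUvf U v f A₂ ∉ 𝓐)
    · simp only [hmap] at he; rw [if_neg hc₁, if_pos hc₂] at he
      exfalso
      rcases hc₂.2 with hb | hn
      · exact lemA hf hvU hint hb (he ▸ h₁)
      · exact hn (he ▸ hsub h₁)
    · simp only [hmap] at he; rw [if_neg hc₁, if_neg hc₂] at he
      exact he

lemma phi_subset (hsub : 𝓑 ⊆ 𝓐) : phi U v f 𝓐 𝓑 ⊆ famUvf U v f 𝓐 := by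
  intro X hX
  obtain ⟨A, hA, hh⟩ := mem_image.mp hX
  by_cases hc : v ∉ A ∧ (Bad U v f 𝓐 𝓑 A ∨ setUvf U v f A ∉ 𝓐)
  · rw [hmap, if_pos hc] at hh
    exact mem_union_left _ (by rw [← hh]; exact mem_image_of_mem _ (hsub hA))
  · rw [hmap, if_neg hc] at hh
    push_neg at hc
    have hX𝓐 : X ∈ 𝓐 := by rw [← hh]; exact hsub hA
    have hCX : setUvf U v f X ∈ 𝓐 := by
      rw [← hh]
      by_cases hv : v ∈ A
      · rw [setUvf_of_mem hv]; exact hsub hA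
      · exact (hc hv).2
    exact mem_union_right _ (mem_filter.mpr ⟨hX𝓐, hCX⟩)

lemma phi_key {A B : Finset ℕ} (hA : A ∈ 𝓑) (hB : B ∈ 𝓑)
    (hvA : v ∉ A) (hnb : ¬ Bad U v f 𝓐 𝓑 A) (hCA : setUvf U v f A ∈ 𝓐)
    (hvB : v ∉ B) (hor : Bad U v f 𝓐 𝓑 B ∨ setUvf U v f B ∉ 𝓐) :
    (A ∩ setUvf U v f B).Nonempty := by
  rcases (A ∩ setUvf U v f B).eq_empty_or_nonempty with hd | h
  · exfalso; apply hnb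
    rcases hor with hb | hn
    · exact Bad.step A B hA hvA hCA hb hd
    · exact Bad.base A B hA hvA hCA hB hvB hn hd
  · exact h

lemma phi_inter (hint : IsIntersecting 𝓑) : IsIntersecting (phi U v f 𝓐 𝓑) := by
  intro X hX Y hY
  obtain ⟨A, hA, hhA⟩ := mem_image.mp hX
  obtain ⟨B, hB, hhB⟩ := mem_image.mp hY
  by_cases hcA : v ∉ A ∧ (Bad U v f 𝓐 𝓑 A ∨ setUvf U v f A ∉ 𝓐)
  · rw [hmap, if_pos hcA] at hhA
    by_cases hcB : v ∉ B ∧ (Bad U v f 𝓐 𝓑 B ∨ setUvf U v f B ∉ 𝓐)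
    · rw [hmap, if_pos hcB] at hhB
      exact ⟨v, mem_inter.mpr ⟨by rw [← hhA]; exact v_mem_setUvf,
        by rw [← hhB]; exact v_mem_setUvf⟩⟩
    · rw [hmap, if_neg hcB] at hhB
      by_cases hvB : v ∈ B
      · exact ⟨v, mem_inter.mpr ⟨by rw [← hhA]; exact v_mem_setUvf, by rw [← hhB]; exact hvB⟩⟩
      · push_neg at hcB
        obtain ⟨hnb, hCB⟩ := hcB hvB
        have hne := phi_key hB hA hvB hnb hCB hcA.1 hcA.2
        rw [← hhA, ← hhB, inter_comm]
        exact hne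
  · rw [hmap, if_neg hcA] at hhA
    by_cases hcB : v ∉ B ∧ (Bad U v f 𝓐 𝓑 B ∨ setUvf U v f B ∉ 𝓐)
    · rw [hmap, if_pos hcB] at hhB
      by_cases hvA : v ∈ A
      · exact ⟨v, mem_inter.mpr ⟨by rw [← hhA]; exact hvA, by rw [← hhB]; exact v_mem_setUvf⟩⟩
      · push_neg at hcA
        obtain ⟨hnb, hCA⟩ := hcA hvA
        have hne := phi_key hA hB hvA hnb hCA hcB.1 hcB.2
        rw [← hhA, ← hhB]
        exact hne
    · rw [hmap, if_neg hcB] at hhB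
      rw [← hhA, ← hhB]
      exact hint _ hA _ hB

noncomputable def kmap (U : Finset ℕ) (v : ℕ) (f : ℕ → ℕ) (𝓐 : Finset (Finset ℕ))
    (A : Finset ℕ) : Finset ℕ :=
  if setUvf U v f A ∈ 𝓐 then A else setUvf U v f A

lemma famUvf_eq_image : famUvf U v f 𝓐 = 𝓐.image (kmap U v f 𝓐) := by
  ext X
  constructor
  · intro hX
    rcases mem_union.mp hX with h | h
    · obtain ⟨A, hA, hh⟩ := mem_image.mp h
      by_cases hc : setUvf U v f A ∈ 𝓐
      · refine mem_image.mpr ⟨X, by rw [← hh]; exact hc, ?_⟩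
        have h2 : setUvf U v f X = X := by rw [← hh]; exact setUvf_of_mem v_mem_setUvf
        rw [kmap, h2, if_pos (by rw [← hh]; exact hc)]
      · exact mem_image.mpr ⟨A, hA, by rw [kmap, if_neg hc]; exact hh⟩
    · obtain ⟨hX𝓐, hCX⟩ := mem_filter.mp h
      exact mem_image.mpr ⟨X, hX𝓐, by rw [kmap, if_pos hCX]⟩
  · intro hX
    obtain ⟨A, hA, hh⟩ := mem_image.mp hX
    by_cases hc : setUvf U v f A ∈ 𝓐
    · rw [kmap, if_pos hc] at hh
      exact mem_union_right _ (mem_filter.mpr ⟨by rw [← hh]; exact hA,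
        by rw [← hh]; exact hc⟩)
    · rw [kmap, if_neg hc] at hh
      exact mem_union_left _ (by rw [← hh]; exact mem_image_of_mem _ hA)

lemma famUvf_card (hf : IsPairing f U) (hvU : v ∉ U) :
    (famUvf U v f 𝓐).card = 𝓐.card := by
  rw [famUvf_eq_image]
  apply card_image_of_injOn
  intro A₁ h₁ A₂ h₂ he
  by_cases hc₁ : setUvf U v f A₁ ∈ 𝓐
  · by_cases hc₂ : setUvf U v f A₂ ∈ 𝓐
    · simp only [kmap] at he; rwa [if_pos hc₁, if_pos hc₂] at he
    · simp only [kmap] at he; rw [if_pos hc₁, if_neg hc₂] at he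
      exact absurd (he ▸ h₁) hc₂
  · by_cases hc₂ : setUvf U v f A₂ ∈ 𝓐
    · simp only [kmap] at he; rw [if_neg hc₁, if_pos hc₂] at he
      exact absurd (he ▸ h₂ : setUvf U v f A₁ ∈ 𝓐) hc₁
    · simp only [kmap] at he; rw [if_neg hc₁, if_neg hc₂] at he
      have hv₁ : v ∉ A₁ := fun hv => hc₁ (by rw [setUvf_of_mem hv]; exact h₁)
      have hv₂ : v ∉ A₂ := fun hv => hc₂ (by rw [setUvf_of_mem hv]; exact h₂)
      exact setUvf_inj hf hvU hv₁ hv₂ he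

lemma main (hf : IsPairing f U) (hvU : v ∉ U) {p : ℝ} (hp0 : 0 < p) (hp1 : p < 1) :
    probInter p 𝓐 ≤ probInter p (famUvf U v f 𝓐) := by
  classical
  have hcard : (famUvf U v f 𝓐).card = 𝓐.card := famUvf_card hf hvU
  rw [probInter, probInter]
  have step1 : ∑ 𝓑 ∈ 𝓐.powerset.filter IsIntersecting,
      p ^ 𝓑.card * (1 - p) ^ (𝓐.card - 𝓑.card)
      = ∑ 𝓖 ∈ (𝓐.powerset.filter IsIntersecting).image (phi U v f 𝓐),
        p ^ 𝓖.card * (1 - p) ^ (𝓐.card - 𝓖.card) := by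
    rw [sum_image ?_]
    · apply sum_congr rfl
      intro 𝓑 h
      rw [mem_filter, mem_powerset] at h
      rw [phi_card hf hvU h.1 h.2]
    · intro 𝓑₁ h₁ 𝓑₂ h₂ he
      rw [mem_coe, mem_filter, mem_powerset] at h₁ h₂
      exact Finset.Subset.antisymm
        (subset_of_phi_eq hf hvU h₁.1 h₂.1 h₁.2 h₂.2 he)
        (subset_of_phi_eq hf hvU h₂.1 h₁.1 h₂.2 h₁.2 he.symm)
  rw [step1, hcard]
  apply sum_le_sum_of_subset_of_nonneg
  · intro 𝓖 h𝓖
    obtain ⟨𝓑, h𝓑, hh⟩ := mem_image.mp h𝓖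
    rw [mem_filter, mem_powerset] at h𝓑
    rw [mem_filter, mem_powerset, ← hh]
    exact ⟨phi_subset h𝓑.1, phi_inter h𝓑.2⟩
  · intro i _ _
    exact mul_nonneg (pow_nonneg hp0.le _) (pow_nonneg (by linarith) _)

end S9

theorem stmt9 (n : ℕ) (𝓐 : Finset (Finset ℕ)) (h𝓐 : 𝓐 ⊆ (Finset.Icc 1 n).powerset)
    (U : Finset ℕ) (hU : U ⊆ Finset.Icc 1 n) (hUeven : Even U.card)
    (v : ℕ) (hv : v ∈ Finset.Icc 1 n) (hvU : v ∉ U)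
    (f : ℕ → ℕ) (hf : IsPairing f U)
    (p : ℝ) (hp0 : 0 < p) (hp1 : p < 1) :
    probInter p 𝓐 ≤ probInter p (famUvf U v f 𝓐) := by
  exact S9.main hf hvU hp0 hp1
end

section
/- Let $n$ and $r$ be positive integers with $r \le n/2$, and let $\mathcal{A} \subseteq \mathcal{P}[n]$ with $|\mathcal{A}| = \sum_{j=r}^n \binom{n}{j}$. Then for every nonnegative integer $m$, the family $[n]^{(\geq r)}$ has at least as many intersecting subfamilies of order $m$ as has $\mathcal{A}$. -/
open Finset

-- ====== generic compression ======
section Generic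

variable (σ : Finset ℕ → Finset ℕ) (𝓐 : Finset (Finset ℕ))

open Classical in
noncomputable def cpr : Finset (Finset ℕ) :=
  𝓐.image (fun X => if σ X ∈ 𝓐 then X else σ X)

inductive Swp (𝓑 : Finset (Finset ℕ)) : Finset ℕ → Prop
  | mover (X : Finset ℕ) : X ∈ 𝓑 → σ X ∉ 𝓐 → Swp 𝓑 X
  | chain (X Y : Finset ℕ) : X ∈ 𝓑 → σ X ∈ 𝓐 → σ X ≠ X → Swp 𝓑 Y → X ∩ σ Y = ∅ → Swp 𝓑 X

open Classical in
noncomputable def psi (𝓑 : Finset (Finset ℕ)) (X : Finset ℕ) : Finset ℕ :=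
  if Swp σ 𝓐 𝓑 X then σ X else X

variable {σ 𝓐}
variable {𝓑 𝓑₁ 𝓑₂ : Finset (Finset ℕ)}

lemma Swp.memB {X : Finset ℕ} (h : Swp σ 𝓐 𝓑 X) : X ∈ 𝓑 := by
  cases h with
  | mover _ h1 h2 => exact h1
  | chain _ Y h1 h2 h3 h4 h5 => exact h1

lemma Swp.ne (hb : 𝓑 ⊆ 𝓐) {X : Finset ℕ} (h : Swp σ 𝓐 𝓑 X) : σ X ≠ X := by
  cases h with
  | mover _ h1 h2 => intro e; exact h2 (by rw [e]; exact hb h1)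
  | chain _ Y h1 h2 h3 h4 h5 => exact h3

variable (hinj : ∀ X ∈ 𝓐, ∀ Y ∈ 𝓐, σ X ≠ X → σ Y ≠ Y → σ X = σ Y → X = Y)
variable (hmove : ∀ X ∈ 𝓐, ∀ Y ∈ 𝓐, σ X ≠ X → σ Y ≠ Y → (σ X ∩ σ Y).Nonempty)
variable (hfix : ∀ X ∈ 𝓐, ∀ Y ∈ 𝓐, σ X = X → σ Y ≠ Y → (X ∩ Y).Nonempty → (X ∩ σ Y).Nonempty)
variable (hflip : ∀ X ∈ 𝓐, ∀ Y ∈ 𝓐, σ X ≠ X → σ Y ≠ Y → X ∩ σ Y = ∅ → σ X ∩ Y = ∅)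
variable (hidem : ∀ X, σ (σ X) = σ X)

lemma not_swp_sigma_memA (hb : 𝓑 ⊆ 𝓐) {X : Finset ℕ} (hX : X ∈ 𝓑)
    (h : ¬ Swp σ 𝓐 𝓑 X) : σ X ∈ 𝓐 := by
  by_contra h2
  exact h (Swp.mover X hX h2)

include hidem in
lemma psi_mem_cpr (hb : 𝓑 ⊆ 𝓐) {X : Finset ℕ} (hX : X ∈ 𝓑) :
    psi σ 𝓐 𝓑 X ∈ cpr σ 𝓐 := by
  classical
  unfold psi cpr
  by_cases hs : Swp σ 𝓐 𝓑 X
  · rw [if_pos hs]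
    cases hs with
    | mover _ h1 h2 =>
        exact mem_image.2 ⟨X, hb h1, by rw [if_neg h2]⟩
    | chain _ Y h1 h2 h3 h4 h5 =>
        refine mem_image.2 ⟨σ X, h2, ?_⟩
        rw [hidem X, if_pos h2]
  · rw [if_neg hs]
    exact mem_image.2 ⟨X, hb hX, by rw [if_pos (not_swp_sigma_memA hb hX hs)]⟩

include hinj hflip in
lemma psi_injOn (hb : 𝓑 ⊆ 𝓐) (hI : IsIntersecting 𝓑) :
    ∀ X ∈ 𝓑, ∀ Y ∈ 𝓑, psi σ 𝓐 𝓑 X = psi σ 𝓐 𝓑 Y → X = Y := by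
  classical
  have key : ∀ X ∈ 𝓑, ∀ Y ∈ 𝓑, Swp σ 𝓐 𝓑 X → ¬ Swp σ 𝓐 𝓑 Y → σ X = Y → False := by
    intro X hX Y hY hsX hsY he
    cases hsX with
    | mover _ h1 h2 => exact h2 (he ▸ hb hY)
    | chain _ Z h1 h2 h3 h4 h5 =>
        have hzb : Z ∈ 𝓑 := h4.memB
        have h6 : σ X ∩ Z = ∅ :=
          hflip X (hb h1) Z (hb hzb) h3 (h4.ne hb) h5
        have := hI Y hY Z hzb
        rw [← he] at this
        rw [h6] at this
        exact not_nonempty_empty this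
  intro X hX Y hY he
  unfold psi at he
  by_cases hsX : Swp σ 𝓐 𝓑 X <;> by_cases hsY : Swp σ 𝓐 𝓑 Y
  · rw [if_pos hsX, if_pos hsY] at he
    exact hinj X (hb hX) Y (hb hY) (hsX.ne hb) (hsY.ne hb) he
  · rw [if_pos hsX, if_neg hsY] at he
    exact (key X hX Y hY hsX hsY he).elim
  · rw [if_neg hsX, if_pos hsY] at he
    exact (key Y hY X hX hsY hsX he.symm).elim
  · rw [if_neg hsX, if_neg hsY] at he
    exact he

include hmove hfix in
lemma psi_img_intersecting (hb : 𝓑 ⊆ 𝓐) (hI : IsIntersecting 𝓑) :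
    IsIntersecting (𝓑.image (psi σ 𝓐 𝓑)) := by
  classical
  have key : ∀ X ∈ 𝓑, ∀ Y ∈ 𝓑, ¬ Swp σ 𝓐 𝓑 X → Swp σ 𝓐 𝓑 Y → (X ∩ σ Y).Nonempty := by
    intro X hX Y hY hsX hsY
    by_cases hfx : σ X = X
    · exact hfix X (hb hX) Y (hb hY) hfx (hsY.ne hb) (hI X hX Y hY)
    · have hA : σ X ∈ 𝓐 := not_swp_sigma_memA hb hX hsX
      by_contra hne
      rw [not_nonempty_iff_eq_empty] at hne
      exact hsX (Swp.chain X Y hX hA hfx hsY hne)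
  intro A hA B hB
  obtain ⟨X, hX, rfl⟩ := mem_image.1 hA
  obtain ⟨Y, hY, rfl⟩ := mem_image.1 hB
  unfold psi
  by_cases hsX : Swp σ 𝓐 𝓑 X <;> by_cases hsY : Swp σ 𝓐 𝓑 Y
  · rw [if_pos hsX, if_pos hsY]
    exact hmove X (hb hX) Y (hb hY) (hsX.ne hb) (hsY.ne hb)
  · rw [if_pos hsX, if_neg hsY]
    rw [inter_comm]
    exact key Y hY X hX hsY hsX
  · rw [if_neg hsX, if_pos hsY]
    exact key X hX Y hY hsX hsY
  · rw [if_neg hsX, if_neg hsY]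
    exact hI X hX Y hY

include hinj in
lemma movers_sub (hb1 : 𝓑₁ ⊆ 𝓐) (hb2 : 𝓑₂ ⊆ 𝓐)
    (himg : 𝓑₁.image (psi σ 𝓐 𝓑₁) = 𝓑₂.image (psi σ 𝓐 𝓑₂)) :
    ∀ X ∈ 𝓑₁, σ X ∉ 𝓐 → X ∈ 𝓑₂ := by
  classical
  intro X hX hσ
  have hne : σ X ≠ X := fun e => hσ (by rw [e]; exact hb1 hX)
  have h1 : σ X ∈ 𝓑₁.image (psi σ 𝓐 𝓑₁) := by
    refine mem_image.2 ⟨X, hX, ?_⟩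
    unfold psi
    rw [if_pos (Swp.mover X hX hσ)]
  rw [himg] at h1
  obtain ⟨W, hW, hpsi⟩ := mem_image.1 h1
  unfold psi at hpsi
  by_cases hs : Swp σ 𝓐 𝓑₂ W
  · rw [if_pos hs] at hpsi
    have := hinj W (hb2 hW) X (hb1 hX) (hs.ne hb2) hne hpsi
    rwa [← this]
  · rw [if_neg hs] at hpsi
    exact absurd (hb2 (hpsi ▸ hW)) hσ

include hinj hflip in
lemma descent (hI1 : IsIntersecting 𝓑₁) (hb1 : 𝓑₁ ⊆ 𝓐) (hb2 : 𝓑₂ ⊆ 𝓐)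
    (hM : ∀ Z ∈ 𝓑₂, σ Z ∉ 𝓐 → Z ∈ 𝓑₁)
    (himg : 𝓑₁.image (psi σ 𝓐 𝓑₁) = 𝓑₂.image (psi σ 𝓐 𝓑₂)) :
    ∀ W, Swp σ 𝓐 𝓑₂ W → σ W ∉ 𝓑₁ := by
  classical
  intro W hsw
  induction hsw with
  | mover _ h1 h2 => intro h; exact h2 (hb1 h)
  | chain _ Y h1 h2 h3 h4 h5 ih =>
    rename_i X
    intro hmem
    have h6 : σ X ∩ Y = ∅ :=
      hflip X (hb2 h1) Y (hb2 h4.memB) h3 (h4.ne hb2) h5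
    by_cases hY1 : Y ∈ 𝓑₁
    · have := hI1 (σ X) hmem Y hY1
      rw [h6] at this
      exact not_nonempty_empty this
    · -- Y not a mover, so σ Y ∈ 𝓐
      have hYA : σ Y ∈ 𝓐 := by
        cases h4 with
        | mover _ g1 g2 => exact absurd (hM Y g1 g2) hY1
        | chain _ Z g1 g2 g3 g4 g5 => exact g2
      have h7 : σ Y ∈ 𝓑₂.image (psi σ 𝓐 𝓑₂) := by
        refine mem_image.2 ⟨Y, h4.memB, ?_⟩
        unfold psi
        rw [if_pos h4]
      rw [← himg] at h7
      obtain ⟨V, hV, hpsi⟩ := mem_image.1 h7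
      unfold psi at hpsi
      by_cases hs : Swp σ 𝓐 𝓑₁ V
      · rw [if_pos hs] at hpsi
        have := hinj V (hb1 hV) Y (hb2 h4.memB) (hs.ne hb1) (h4.ne hb2) hpsi
        exact hY1 (this ▸ hV)
      · rw [if_neg hs] at hpsi
        exact ih (hpsi ▸ hV)

include hinj hflip in
lemma img_subset (hI1 : IsIntersecting 𝓑₁) (hI2 : IsIntersecting 𝓑₂)
    (hb1 : 𝓑₁ ⊆ 𝓐) (hb2 : 𝓑₂ ⊆ 𝓐)
    (himg : 𝓑₁.image (psi σ 𝓐 𝓑₁) = 𝓑₂.image (psi σ 𝓐 𝓑₂)) :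
    𝓑₁ ⊆ 𝓑₂ := by
  classical
  intro X hX
  by_contra hX2
  have hM12 : ∀ Z ∈ 𝓑₁, σ Z ∉ 𝓐 → Z ∈ 𝓑₂ := movers_sub hinj hb1 hb2 himg
  have hM21 : ∀ Z ∈ 𝓑₂, σ Z ∉ 𝓐 → Z ∈ 𝓑₁ := movers_sub hinj hb2 hb1 himg.symm
  by_cases hs : Swp σ 𝓐 𝓑₁ X
  · have hXA : σ X ∈ 𝓐 := by
      cases hs with
      | mover _ g1 g2 => exact absurd (hM12 X g1 g2) hX2
      | chain _ Z g1 g2 g3 g4 g5 => exact g2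
    have h1 : σ X ∈ 𝓑₁.image (psi σ 𝓐 𝓑₁) := by
      refine mem_image.2 ⟨X, hX, ?_⟩
      unfold psi; rw [if_pos hs]
    rw [himg] at h1
    obtain ⟨W, hW, hpsi⟩ := mem_image.1 h1
    unfold psi at hpsi
    by_cases hsW : Swp σ 𝓐 𝓑₂ W
    · rw [if_pos hsW] at hpsi
      have := hinj W (hb2 hW) X (hb1 hX) (hsW.ne hb2) (hs.ne hb1) hpsi
      exact hX2 (this ▸ hW)
    · rw [if_neg hsW] at hpsi
      -- W = σ X ∈ 𝓑₂ : use descent with roles swapped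
      exact (descent hinj hflip hI2 hb2 hb1 hM12 himg.symm X hs) (hpsi ▸ hW)
  · have h1 : X ∈ 𝓑₁.image (psi σ 𝓐 𝓑₁) := by
      refine mem_image.2 ⟨X, hX, ?_⟩
      unfold psi; rw [if_neg hs]
    rw [himg] at h1
    obtain ⟨W, hW, hpsi⟩ := mem_image.1 h1
    unfold psi at hpsi
    by_cases hsW : Swp σ 𝓐 𝓑₂ W
    · rw [if_pos hsW] at hpsi
      exact (descent hinj hflip hI1 hb1 hb2 hM21 himg W hsW) (hpsi ▸ hX)
    · rw [if_neg hsW] at hpsi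
      exact hX2 (hpsi ▸ hW)

include hinj hmove hfix hflip hidem in
lemma numInter_le_cpr (m : ℕ) : numInter 𝓐 m ≤ numInter (cpr σ 𝓐) m := by
  classical
  unfold numInter
  apply card_le_card_of_injOn (fun 𝓑 => 𝓑.image (psi σ 𝓐 𝓑))
  · intro 𝓑 h𝓑
    rw [mem_coe, mem_filter, mem_filter, mem_powerset] at h𝓑
    obtain ⟨⟨hsub, hint⟩, hcard⟩ := h𝓑
    beta_reduce
    rw [mem_coe, mem_filter, mem_filter, mem_powerset]
    refine ⟨⟨?_, ?_⟩, ?_⟩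
    · intro W hW
      obtain ⟨X, hX, rfl⟩ := mem_image.1 hW
      exact psi_mem_cpr hidem hsub hX
    · exact psi_img_intersecting hmove hfix hsub hint
    · rw [card_image_of_injOn, hcard]
      intro x hx y hy
      exact psi_injOn hinj hflip hsub hint x hx y hy
  · intro 𝓑₁ h1 𝓑₂ h2 he
    simp only [Set.mem_toFinset, mem_coe, mem_filter, mem_powerset] at h1 h2
    obtain ⟨⟨hs1, hi1⟩, hc1⟩ := h1
    obtain ⟨⟨hs2, hi2⟩, hc2⟩ := h2
    exact Subset.antisymm (img_subset hinj hflip hi1 hi2 hs1 hs2 he)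
      (img_subset hinj hflip hi2 hi1 hs2 hs1 he.symm)

end Generic

-- ====== setUvf verification ======
section Uvf

variable {U : Finset ℕ} {v : ℕ} {f : ℕ → ℕ}
variable (hp : IsPairing f U) (hv : v ∉ U)

lemma mem_setUvf_self (A : Finset ℕ) : v ∈ setUvf U v f A := by
  unfold setUvf
  by_cases h : v ∈ A
  · rwa [if_pos h]
  · rw [if_neg h]
    simp

lemma setUvf_eq_self_iff (A : Finset ℕ) : setUvf U v f A = A ↔ v ∈ A := by
  constructor
  · intro h
    have := mem_setUvf_self (U := U) (v := v) (f := f) A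
    rwa [h] at this
  · intro h
    unfold setUvf
    rw [if_pos h]

lemma setUvf_of_not_mem {A : Finset ℕ} (h : v ∉ A) :
    setUvf U v f A = (A ∩ U).image f ∪ {v} ∪ (A \ U) := by
  unfold setUvf
  rw [if_neg h]

include hp in
lemma setUvf_inter_U (hv : v ∉ U) {A : Finset ℕ} (h : v ∉ A) :
    setUvf U v f A ∩ U = (A ∩ U).image f := by
  rw [setUvf_of_not_mem h]
  rw [union_inter_distrib_right, union_inter_distrib_right]
  have h1 : (A ∩ U).image f ∩ U = (A ∩ U).image f := by
    apply inter_eq_left.2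
    intro x hx
    obtain ⟨y, hy, rfl⟩ := mem_image.1 hx
    exact hp.1 y (mem_inter.1 hy).2
  have h2 : ({v} : Finset ℕ) ∩ U = ∅ := by
    simp [hv]
  have h3 : (A \ U) ∩ U = ∅ := sdiff_inter_self U A
  rw [h1, h2, h3, union_empty, union_empty]

include hp in
lemma setUvf_sdiff (hv : v ∉ U) {A : Finset ℕ} (h : v ∉ A) :
    setUvf U v f A \ insert v U = A \ U := by
  rw [setUvf_of_not_mem h, union_sdiff_distrib, union_sdiff_distrib]
  have h1 : (A ∩ U).image f \ insert v U = ∅ := by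
    rw [sdiff_eq_empty_iff_subset]
    intro x hx
    obtain ⟨y, hy, rfl⟩ := mem_image.1 hx
    exact mem_insert.2 (Or.inr (hp.1 y (mem_inter.1 hy).2))
  have h2 : ({v} : Finset ℕ) \ insert v U = ∅ := by
    rw [sdiff_eq_empty_iff_subset]
    intro x hx
    rw [mem_singleton.1 hx]
    exact mem_insert_self v U
  have h3 : (A \ U) \ insert v U = A \ U := by
    rw [Finset.sdiff_eq_self_iff_disjoint, disjoint_right]
    intro x hx hc
    obtain ⟨hxA, hxU⟩ := mem_sdiff.1 hc
    rcases mem_insert.1 hx with (rfl | hU)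
    · exact h hxA
    · exact hxU hU
  rw [h1, h2, h3, empty_union, empty_union]

include hp in
lemma setUvf_recover (hv : v ∉ U) {A : Finset ℕ} (h : v ∉ A) :
    ((setUvf U v f A ∩ U).image f) ∪ (setUvf U v f A \ insert v U) = A := by
  rw [setUvf_inter_U hp hv h, setUvf_sdiff hp hv h]
  have h1 : ((A ∩ U).image f).image f = A ∩ U := by
    rw [Finset.image_image]
    rw [show ((A ∩ U).image (f ∘ f)) = (A ∩ U).image id from
      Finset.image_congr (fun x hx => hp.2.1 x (mem_inter.1 hx).2)]
    exact Finset.image_id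
  rw [h1]
  ext x
  simp only [mem_union, mem_inter, mem_sdiff]
  constructor
  · rintro (⟨h1, _⟩ | ⟨h1, _⟩) <;> exact h1
  · intro hx
    by_cases hxU : x ∈ U
    · exact Or.inl ⟨hx, hxU⟩
    · exact Or.inr ⟨hx, hxU⟩

include hp in
lemma setUvf_inj (hv : v ∉ U) {A B : Finset ℕ} (hA : v ∉ A) (hB : v ∉ B)
    (h : setUvf U v f A = setUvf U v f B) : A = B := by
  rw [← setUvf_recover hp hv hA, ← setUvf_recover hp hv hB, h]

include hp in
lemma setUvf_flip (hv : v ∉ U) {X Y : Finset ℕ} (hX : v ∉ X) (hY : v ∉ Y)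
    (h : X ∩ setUvf U v f Y = ∅) : setUvf U v f X ∩ Y = ∅ := by
  rw [eq_empty_iff_forall_notMem]
  intro z hz
  obtain ⟨hz1, hz2⟩ := mem_inter.1 hz
  rw [setUvf_of_not_mem hX] at hz1
  rw [eq_empty_iff_forall_notMem] at h
  rcases mem_union.1 hz1 with (h1 | h1)
  · rcases mem_union.1 h1 with (h2 | h2)
    · -- z = f x for x ∈ X ∩ U
      obtain ⟨x, hx, rfl⟩ := mem_image.1 h2
      have hzU : f x ∈ U := hp.1 x (mem_inter.1 hx).2
      have : f (f x) ∈ setUvf U v f Y := by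
        rw [setUvf_of_not_mem hY]
        refine mem_union.2 (Or.inl (mem_union.2 (Or.inl ?_)))
        exact mem_image.2 ⟨f x, mem_inter.2 ⟨hz2, hzU⟩, rfl⟩
      rw [hp.2.1 x (mem_inter.1 hx).2] at this
      exact h x (mem_inter.2 ⟨(mem_inter.1 hx).1, this⟩)
    · -- z = v
      rw [mem_singleton.1 h2] at hz2
      exact hY hz2
  · -- z ∈ X \ U
    have hzX := (mem_sdiff.1 h1).1
    have hzU := (mem_sdiff.1 h1).2
    have : z ∈ setUvf U v f Y := by
      rw [setUvf_of_not_mem hY]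
      exact mem_union.2 (Or.inr (mem_sdiff.2 ⟨hz2, hzU⟩))
    exact h z (mem_inter.2 ⟨hzX, this⟩)

lemma setUvf_idem (A : Finset ℕ) : setUvf U v f (setUvf U v f A) = setUvf U v f A :=
  (setUvf_eq_self_iff _).2 (mem_setUvf_self A)

include hp in
lemma setUvf_card (hv : v ∉ U) {A : Finset ℕ} (h : v ∉ A) :
    (setUvf U v f A).card = A.card + 1 := by
  rw [setUvf_of_not_mem h]
  have hd1 : Disjoint ((A ∩ U).image f) ({v} : Finset ℕ) := by
    rw [disjoint_singleton_right]
    intro hc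
    obtain ⟨y, hy, he⟩ := mem_image.1 hc
    exact hv (he ▸ hp.1 y (mem_inter.1 hy).2)
  have hd2 : Disjoint ((A ∩ U).image f ∪ {v}) (A \ U) := by
    rw [disjoint_union_left]
    constructor
    · rw [disjoint_left]
      intro a ha hc
      obtain ⟨y, hy, he⟩ := mem_image.1 ha
      exact (mem_sdiff.1 hc).2 (he ▸ hp.1 y (mem_inter.1 hy).2)
    · rw [disjoint_singleton_left]
      intro hc
      exact h (mem_sdiff.1 hc).1
  rw [card_union_of_disjoint hd2, card_union_of_disjoint hd1]
  have hinjU : ∀ x ∈ A ∩ U, ∀ y ∈ A ∩ U, f x = f y → x = y := by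
    intro x hx y hy he
    have := congrArg f he
    rwa [hp.2.1 x (mem_inter.1 hx).2, hp.2.1 y (mem_inter.1 hy).2] at this
  rw [card_image_of_injOn hinjU, card_singleton]
  have := card_inter_add_card_sdiff A U
  omega

include hp in
lemma setUvf_subset {S A : Finset ℕ} (hA : A ⊆ S) (hU : U ⊆ S) (hvS : v ∈ S) :
    setUvf U v f A ⊆ S := by
  unfold setUvf
  by_cases h : v ∈ A
  · rwa [if_pos h]
  · rw [if_neg h]
    intro x hx
    rcases mem_union.1 hx with (h1 | h1)
    · rcases mem_union.1 h1 with (h2 | h2)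
      · obtain ⟨y, hy, rfl⟩ := mem_image.1 h2
        exact hU (hp.1 y (mem_inter.1 hy).2)
      · rwa [mem_singleton.1 h2]
    · exact hA (mem_sdiff.1 h1).1

end Uvf

-- ====== pairing construction ======
lemma exists_pairing {D E : Finset ℕ} (hdisj : Disjoint D E) (hcard : D.card = E.card) :
    ∃ f : ℕ → ℕ, IsPairing f (D ∪ E) ∧ D.image f = E := by
  classical
  have e := Finset.equivOfCardEq hcard
  set f : ℕ → ℕ := fun x =>
    if hx : x ∈ D then (e ⟨x, hx⟩ : ℕ)
    else if hx : x ∈ E then (e.symm ⟨x, hx⟩ : ℕ)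
    else x with hf
  have hDE : ∀ x, (hx : x ∈ D) → f x = (e ⟨x, hx⟩ : ℕ) := by
    intro x hx; simp [hf, hx]
  have hED : ∀ x, (hx : x ∈ E) → f x = (e.symm ⟨x, hx⟩ : ℕ) := by
    intro x hx
    have hxD : x ∉ D := disjoint_right.1 hdisj hx
    simp [hf, hxD, hx]
  have hfD : ∀ x, (hx : x ∈ D) → f x ∈ E := by
    intro x hx; rw [hDE x hx]; exact (e ⟨x, hx⟩).2
  have hfE : ∀ x, (hx : x ∈ E) → f x ∈ D := by
    intro x hx; rw [hED x hx]; exact (e.symm ⟨x, hx⟩).2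
  have hffD : ∀ x, (hx : x ∈ D) → f (f x) = x := by
    intro x h
    have h2 : f x ∈ E := hfD x h
    rw [hED (f x) h2]
    have h3 : (⟨f x, h2⟩ : {a // a ∈ E}) = e ⟨x, h⟩ := Subtype.ext (hDE x h)
    rw [h3, Equiv.symm_apply_apply]
  have hffE : ∀ x, (hx : x ∈ E) → f (f x) = x := by
    intro x h
    have h2 : f x ∈ D := hfE x h
    rw [hDE (f x) h2]
    have h3 : (⟨f x, h2⟩ : {a // a ∈ D}) = e.symm ⟨x, h⟩ := Subtype.ext (hED x h)
    rw [h3, Equiv.apply_symm_apply]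
  refine ⟨f, ⟨?_, ?_, ?_⟩, ?_⟩
  · intro x hx
    rcases mem_union.1 hx with (h | h)
    · exact mem_union.2 (Or.inr (hfD x h))
    · exact mem_union.2 (Or.inl (hfE x h))
  · intro x hx
    rcases mem_union.1 hx with (h | h)
    · exact hffD x h
    · exact hffE x h
  · intro x hx he
    rcases mem_union.1 hx with (h | h)
    · have h2 : f x ∈ E := hfD x h
      rw [he] at h2
      exact disjoint_left.1 hdisj h h2
    · have h2 : f x ∈ D := hfE x h
      rw [he] at h2
      exact disjoint_left.1 hdisj h2 h
  · apply Subset.antisymm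
    · intro y hy
      obtain ⟨x, hx, rfl⟩ := mem_image.1 hy
      exact hfD x hx
    · intro y hy
      exact mem_image.2 ⟨f y, hfE y hy, hffE y hy⟩

-- ====== endgame ======
lemma card_atLeast (n r : ℕ) : (atLeast n r).card = ∑ j ∈ Finset.Icc r n, n.choose j := by
  classical
  have hrep : atLeast n r = (Finset.Icc r n).biUnion
      (fun j => Finset.powersetCard j (Finset.Icc 1 n)) := by
    ext A
    simp only [atLeast, mem_filter, mem_powerset, mem_biUnion, Finset.mem_powersetCard,
      Finset.mem_Icc]
    constructor
    · rintro ⟨h1, h2⟩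
      refine ⟨A.card, ⟨h2, ?_⟩, h1, rfl⟩
      have := card_le_card h1
      rwa [Nat.card_Icc, Nat.add_sub_cancel] at this
    · rintro ⟨j, ⟨hj1, _⟩, hsub, hcard⟩
      exact ⟨hsub, hcard ▸ hj1⟩
  rw [hrep, card_biUnion]
  · apply Finset.sum_congr rfl
    intro j _
    rw [Finset.card_powersetCard, Nat.card_Icc, Nat.add_sub_cancel]
  · intro i _ j _ hij
    rw [Function.onFun, disjoint_left]
    intro A hA hB
    rw [Finset.mem_powersetCard] at hA hB
    exact hij (hA.2 ▸ hB.2)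

lemma exists_XY {n r : ℕ} {𝓐 : Finset (Finset ℕ)} (h𝓐 : 𝓐 ⊆ (Finset.Icc 1 n).powerset)
    (hcard : 𝓐.card = (atLeast n r).card) (hne : 𝓐 ≠ atLeast n r) :
    ∃ X ∈ 𝓐, ∃ Y, Y ⊆ Finset.Icc 1 n ∧ Y.card = X.card + 1 ∧ Y ∉ 𝓐 := by
  classical
  by_contra hcon
  push_neg at hcon
  have hstep : ∀ X ∈ 𝓐, ∀ Y, Y ⊆ Finset.Icc 1 n → Y.card = X.card + 1 → Y ∈ 𝓐 := by
    intro X hX Y h1 h2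
    exact hcon X hX Y h1 h2
  -- every member has card ≥ r
  have hbig : ∀ X ∈ 𝓐, r ≤ X.card := by
    by_contra hb
    push_neg at hb
    obtain ⟨X₀, hX₀, hs⟩ := hb
    have claim2 : ∀ t, ∀ Y, Y ⊆ Finset.Icc 1 n → X₀.card < t → Y.card = t → Y ∈ 𝓐 := by
      intro t
      induction t with
      | zero => intro Y _ h _; omega
      | succ t ih =>
          intro Y hYsub hlt hYcard
          by_cases hcase : X₀.card = t
          · exact hstep X₀ hX₀ Y hYsub (by omega)
          · have hlt' : X₀.card < t := by omega
            obtain ⟨Z, hZsub, hZcard⟩ := Finset.exists_subset_card_eq (show t ≤ Y.card by omega)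
            have hZ : Z ∈ 𝓐 := ih Z (hZsub.trans hYsub) hlt' hZcard
            exact hstep Z hZ Y hYsub (by omega)
    have hsub2 : atLeast n (X₀.card + 1) ⊆ 𝓐 := by
      intro Y hY
      rw [atLeast, mem_filter, mem_powerset] at hY
      exact claim2 Y.card Y hY.1 (by omega) rfl
    have hins : insert X₀ (atLeast n (X₀.card + 1)) ⊆ 𝓐 := by
      intro Z hZ
      rcases mem_insert.1 hZ with (rfl | hZ)
      · exact hX₀
      · exact hsub2 hZ
    have hnotmem : X₀ ∉ atLeast n (X₀.card + 1) := by
      rw [atLeast, mem_filter]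
      push_neg
      intro _
      omega
    have h1 : (atLeast n (X₀.card + 1)).card + 1 ≤ 𝓐.card := by
      have := card_le_card hins
      rwa [card_insert_of_notMem hnotmem] at this
    have h2 : (atLeast n r).card ≤ (atLeast n (X₀.card + 1)).card := by
      apply card_le_card
      intro Z hZ
      rw [atLeast, mem_filter] at hZ ⊢
      exact ⟨hZ.1, by omega⟩
    omega
  have hsub : 𝓐 ⊆ atLeast n r := by
    intro X hX
    rw [atLeast, mem_filter, mem_powerset]
    exact ⟨mem_powerset.1 (h𝓐 hX), hbig X hX⟩
  exact hne (Finset.eq_of_subset_of_card_le hsub (le_of_eq hcard.symm))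

lemma exists_sigma_move {n : ℕ} {X Y : Finset ℕ} (hXsub : X ⊆ Finset.Icc 1 n)
    (hY : Y ⊆ Finset.Icc 1 n) (hYcard : Y.card = X.card + 1) :
    ∃ U v f, IsPairing f U ∧ v ∉ U ∧ U ⊆ Finset.Icc 1 n ∧ v ∈ Finset.Icc 1 n ∧
      setUvf U v f X = Y := by
  classical
  set D := X \ Y with hD
  have hcards : (Y \ X).card = D.card + 1 := by
    have e1 := Finset.card_sdiff_add_card_inter Y X
    have e2 := Finset.card_sdiff_add_card_inter X Y
    rw [inter_comm] at e1
    have e3 : D.card = (X \ Y).card := by rw [hD]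
    omega
  obtain ⟨E, hEsub, hEcard⟩ := Finset.exists_subset_card_eq (show D.card ≤ (Y \ X).card by omega)
  have hvne : ((Y \ X) \ E).Nonempty := by
    rw [← card_pos, card_sdiff_of_subset hEsub]
    omega
  obtain ⟨v, hv⟩ := hvne
  have hvYX : v ∈ Y \ X := (mem_sdiff.1 hv).1
  have hvE : v ∉ E := (mem_sdiff.1 hv).2
  have hvY : v ∈ Y := (mem_sdiff.1 hvYX).1
  have hvX : v ∉ X := (mem_sdiff.1 hvYX).2
  have hdisj : Disjoint D E := by
    rw [disjoint_left]
    intro a ha hc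
    exact (mem_sdiff.1 ha).2 (mem_sdiff.1 (hEsub hc)).1
  obtain ⟨f, hpair, himg⟩ := exists_pairing hdisj hEcard.symm
  refine ⟨D ∪ E, v, f, hpair, ?_, ?_, hY hvY, ?_⟩
  · rw [mem_union]
    push_neg
    constructor
    · intro hc; exact hvX (mem_sdiff.1 hc).1
    · exact hvE
  · intro x hx
    rcases mem_union.1 hx with (h | h)
    · exact hXsub (mem_sdiff.1 h).1
    · exact hY (mem_sdiff.1 (hEsub h)).1
  · rw [setUvf_of_not_mem hvX]
    have h1 : X ∩ (D ∪ E) = D := by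
      rw [inter_union_distrib_left]
      have e1 : X ∩ D = D := inter_eq_right.2 (sdiff_subset)
      have e2 : X ∩ E = ∅ := by
        rw [← disjoint_iff_inter_eq_empty, disjoint_left]
        intro a ha hc
        exact (mem_sdiff.1 (hEsub hc)).2 ha
      rw [e1, e2, union_empty]
    have h2 : X \ (D ∪ E) = X ∩ Y := by
      rw [sdiff_union_distrib]
      have e1 : X \ D = X ∩ Y := Finset.sdiff_sdiff_self_left X Y
      have e2 : X \ E = X := by
        rw [Finset.sdiff_eq_self_iff_disjoint, disjoint_right]
        intro a ha hc
        exact (mem_sdiff.1 (hEsub ha)).2 hc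
      rw [e1, e2, inter_comm, ← inter_assoc, inter_self]
    rw [h1, h2, himg]
    have hEv : E ∪ {v} = Y \ X := by
      apply Finset.eq_of_subset_of_card_le
      · intro a ha
        rcases mem_union.1 ha with (h | h)
        · exact hEsub h
        · rw [mem_singleton.1 h]; exact hvYX
      · have hd : Disjoint E ({v} : Finset ℕ) := by
          rw [disjoint_singleton_right]; exact hvE
        rw [card_union_of_disjoint hd, card_singleton]
        omega
    rw [hEv, inter_comm]
    exact Finset.sdiff_union_inter Y X

-- ====== main induction ======
lemma main_aux (n r m : ℕ) :
    ∀ k (𝓐 : Finset (Finset ℕ)), 𝓐 ⊆ (Finset.Icc 1 n).powerset →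
      𝓐.card = (atLeast n r).card →
      (n + 1) * (atLeast n r).card - (∑ X ∈ 𝓐, X.card) ≤ k →
      numInter 𝓐 m ≤ numInter (atLeast n r) m := by
  classical
  intro k
  induction k with
  | zero =>
      intro 𝓐 h𝓐 hcard hk
      by_cases heq : 𝓐 = atLeast n r
      · rw [heq]
      · exfalso
        have hsum : ∑ X ∈ 𝓐, X.card ≤ n * 𝓐.card := by
          calc ∑ X ∈ 𝓐, X.card ≤ ∑ _X ∈ 𝓐, n := by
                apply sum_le_sum
                intro X hX
                have := card_le_card (mem_powerset.1 (h𝓐 hX))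
                rwa [Nat.card_Icc, Nat.add_sub_cancel] at this
            _ = n * 𝓐.card := by rw [sum_const, smul_eq_mul, mul_comm]
        have hexp : (n + 1) * (atLeast n r).card
            = n * (atLeast n r).card + (atLeast n r).card := by ring
        have hC : (atLeast n r).card = 0 := by
          rw [← hcard] at hexp hk ⊢
          omega
        have h1 : 𝓐 = ∅ := card_eq_zero.1 (by omega)
        have h2 : atLeast n r = ∅ := card_eq_zero.1 hC
        rw [h1, h2] at heq
        exact heq rfl
  | succ k ih =>
      intro 𝓐 h𝓐 hcard hk
      by_cases heq : 𝓐 = atLeast n r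
      · rw [heq]
      · obtain ⟨X, hX, Y, hYsub, hYcard, hYA⟩ := exists_XY h𝓐 hcard heq
        obtain ⟨U, v, f, hp, hv, hU, hvI, hσ⟩ :=
          exists_sigma_move (mem_powerset.1 (h𝓐 hX)) hYsub hYcard
        set σ : Finset ℕ → Finset ℕ := setUvf U v f with hσdef
        have hvnot : ∀ Z : Finset ℕ, σ Z ≠ Z → v ∉ Z := by
          intro Z hZ hc
          exact hZ ((setUvf_eq_self_iff Z).2 hc)
        have hinj' : ∀ Z ∈ 𝓐, ∀ W ∈ 𝓐, σ Z ≠ Z → σ W ≠ W → σ Z = σ W → Z = W := by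
          intro Z _ W _ h1 h2 h3
          exact setUvf_inj hp hv (hvnot Z h1) (hvnot W h2) h3
        have hmove' : ∀ Z ∈ 𝓐, ∀ W ∈ 𝓐, σ Z ≠ Z → σ W ≠ W → (σ Z ∩ σ W).Nonempty := by
          intro Z _ W _ _ _
          exact ⟨v, mem_inter.2 ⟨mem_setUvf_self Z, mem_setUvf_self W⟩⟩
        have hfix' : ∀ Z ∈ 𝓐, ∀ W ∈ 𝓐, σ Z = Z → σ W ≠ W → (Z ∩ W).Nonempty →
            (Z ∩ σ W).Nonempty := by
          intro Z _ W _ h1 _ _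
          have hvZ : v ∈ Z := (setUvf_eq_self_iff Z).1 h1
          exact ⟨v, mem_inter.2 ⟨hvZ, mem_setUvf_self W⟩⟩
        have hflip' : ∀ Z ∈ 𝓐, ∀ W ∈ 𝓐, σ Z ≠ Z → σ W ≠ W → Z ∩ σ W = ∅ → σ Z ∩ W = ∅ := by
          intro Z _ W _ h1 h2 h3
          exact setUvf_flip hp hv (hvnot Z h1) (hvnot W h2) h3
        have hidem' : ∀ Z : Finset ℕ, σ (σ Z) = σ Z := fun Z => setUvf_idem Z
        have hpsiinj : ∀ Z ∈ 𝓐, ∀ W ∈ 𝓐,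
            (if σ Z ∈ 𝓐 then Z else σ Z) = (if σ W ∈ 𝓐 then W else σ W) → Z = W := by
          intro Z hZ W hW he
          by_cases c1 : σ Z ∈ 𝓐 <;> by_cases c2 : σ W ∈ 𝓐
          · rwa [if_pos c1, if_pos c2] at he
          · rw [if_pos c1, if_neg c2] at he
            exact (c2 (he ▸ hZ)).elim
          · rw [if_neg c1, if_pos c2] at he
            exact (c1 (he ▸ hW)).elim
          · rw [if_neg c1, if_neg c2] at he
            have hZne : σ Z ≠ Z := fun e => c1 (by rw [e]; exact hZ)
            have hWne : σ W ≠ W := fun e => c2 (by rw [e]; exact hW)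
            exact hinj' Z hZ W hW hZne hWne he
        have hcprsub : cpr σ 𝓐 ⊆ (Finset.Icc 1 n).powerset := by
          intro W hW
          obtain ⟨Z, hZ, rfl⟩ := mem_image.1 hW
          by_cases c : σ Z ∈ 𝓐
          · rw [if_pos c]; exact h𝓐 hZ
          · rw [if_neg c]
            rw [mem_powerset]
            exact setUvf_subset hp (mem_powerset.1 (h𝓐 hZ)) hU hvI
        have hcprcard : (cpr σ 𝓐).card = 𝓐.card := by
          apply card_image_of_injOn
          intro x hx y hy
          exact hpsiinj x hx y hy
        have hsum : ∑ Z ∈ 𝓐, Z.card < ∑ W ∈ cpr σ 𝓐, W.card := by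
          unfold cpr
          rw [Finset.sum_image (fun x hx y hy => hpsiinj x hx y hy)]
          apply Finset.sum_lt_sum
          · intro Z hZ
            by_cases c : σ Z ∈ 𝓐
            · rw [if_pos c]
            · rw [if_neg c]
              have : σ Z ≠ Z := fun e => c (by rw [e]; exact hZ)
              rw [setUvf_card hp hv (hvnot Z this)]
              omega
          · refine ⟨X, hX, ?_⟩
            have hc : σ X ∉ 𝓐 := by rw [hσ]; exact hYA
            rw [if_neg hc]
            have : σ X ≠ X := fun e => hc (by rw [e]; exact hX)
            rw [setUvf_card hp hv (hvnot X this)]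
            omega
        have hle : numInter 𝓐 m ≤ numInter (cpr σ 𝓐) m :=
          numInter_le_cpr hinj' hmove' hfix' hflip' hidem' m
        refine le_trans hle (ih (cpr σ 𝓐) hcprsub (by rw [hcprcard, hcard]) ?_)
        have := hk
        omega

theorem numInter_le_atLeast_final (n r m : ℕ) (𝓐 : Finset (Finset ℕ))
    (h𝓐 : 𝓐 ⊆ (Finset.Icc 1 n).powerset)
    (hcard : 𝓐.card = ∑ j ∈ Finset.Icc r n, n.choose j) :
    numInter 𝓐 m ≤ numInter (atLeast n r) m := by
  have hc : 𝓐.card = (atLeast n r).card := by rw [hcard, card_atLeast]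
  exact main_aux n r m ((n + 1) * (atLeast n r).card) 𝓐 h𝓐 hc (Nat.sub_le _ _)

theorem stmt10 (n r : ℕ) (hn : 0 < n) (hr : 0 < r) (hrn : 2 * r ≤ n)
    (𝓐 : Finset (Finset ℕ)) (h𝓐 : 𝓐 ⊆ (Finset.Icc 1 n).powerset)
    (hcard : 𝓐.card = ∑ j ∈ Finset.Icc r n, n.choose j) (m : ℕ) :
    numInter 𝓐 m ≤ numInter (atLeast n r) m :=
  numInter_le_atLeast_final n r m 𝓐 h𝓐 hcard
end

section
/- Let $t$ be a positive integer, let $\mathcal{A} \subseteq \mathcal{P}[n]$ be $t$-intersecting, and let $U, V \subseteq [n]$ be disjoint with $|U| > |V|$. Suppose that $\mathcal{A}$ is $U'V'$-compressed for all $U' \subseteq U$ and $V' \subseteq V$ with $|U'| > |V'|$ and $(U',V') \neq (U,V)$. Then $\mathcal{C}_{UV}\mathcal{A}$ is $t$-intersecting. -/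
open Finset

lemma cardKey (U V A B : Finset ℕ) (hVA : V ⊆ A) (hUA : Disjoint U A) :
    (((A ∪ U) \ V) ∩ B).card + (V ∩ B).card = (A ∩ B).card + (U ∩ B).card := by
  have hUV : Disjoint U V := hUA.mono_right hVA
  have hset : ((A ∪ U) \ V) ∩ B = ((A ∩ B) \ (V ∩ B)) ∪ (U ∩ B) := by
    ext x
    simp only [mem_inter, mem_sdiff, mem_union]
    have h1 : x ∈ U → x ∉ A := fun h => Finset.disjoint_left.mp hUA h
    have h2 : x ∈ V → x ∈ A := fun h => hVA h
    have h3 : x ∈ U → x ∉ V := fun h => Finset.disjoint_left.mp hUV h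
    tauto
  have hdisj : Disjoint ((A ∩ B) \ (V ∩ B)) (U ∩ B) := by
    rw [Finset.disjoint_left]
    intro x hx hx'
    exact Finset.disjoint_left.mp hUA (mem_inter.mp hx').1
      (mem_inter.mp (mem_sdiff.mp hx).1).1
  have hsub : V ∩ B ⊆ A ∩ B := inter_subset_inter hVA subset_rfl
  rw [hset, card_union_of_disjoint hdisj, card_sdiff_of_subset hsub]
  have := card_le_card hsub
  omega

lemma famUV_mem {U V : Finset ℕ} {𝓐 : Finset (Finset ℕ)} {X : Finset ℕ}
    (hX : X ∈ famUV U V 𝓐) :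
    X ∈ 𝓐 ∨ ∃ A ∈ 𝓐, V ⊆ A ∧ Disjoint U A ∧ X = (A ∪ U) \ V := by
  rcases mem_union.mp hX with h | h
  · obtain ⟨A, hA, hXA⟩ := mem_image.mp h
    by_cases hc : V ⊆ A ∧ Disjoint U A
    · right
      refine ⟨A, hA, hc.1, hc.2, ?_⟩
      rw [← hXA, setUV, if_pos hc]
    · left
      rw [setUV, if_neg hc] at hXA
      rwa [← hXA]
  · exact Or.inl (mem_filter.mp h).1

lemma mixedCase (t : ℕ) (𝓐 : Finset (Finset ℕ)) (hT : TIntersecting t 𝓐)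
    (U V : Finset ℕ) (hcard : V.card < U.card)
    (hcomp : ∀ U' V' : Finset ℕ, U' ⊆ U → V' ⊆ V → V'.card < U'.card →
      (U', V') ≠ (U, V) → famUV U' V' 𝓐 = 𝓐)
    (A B : Finset ℕ) (hA : A ∈ 𝓐) (hB : B ∈ 𝓐) (hBfam : B ∈ famUV U V 𝓐)
    (hVA : V ⊆ A) (hUA : Disjoint U A) :
    t ≤ (((A ∪ U) \ V) ∩ B).card := by
  have hUV : Disjoint U V := hUA.mono_right hVA
  have ht' : t ≤ (A ∩ B).card := hT A hA B hB
  by_cases hVB : V ⊆ B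
  · rcases V.eq_empty_or_nonempty with hVe | ⟨v₀, hv₀⟩
    · subst hVe
      simp only [sdiff_empty]
      exact le_trans ht' (card_le_card (inter_subset_inter subset_union_left subset_rfl))
    · rcases (U ∩ B).eq_empty_or_nonempty with hUBe | ⟨u₀, hu₀⟩
      · -- U ∩ B = ∅ : use structure of B in famUV
        have hDUB : Disjoint U B := disjoint_iff_inter_eq_empty.mpr hUBe
        have hVne : V ≠ ∅ := ne_empty_of_mem hv₀
        have hBstar : (B ∪ U) \ V ∈ 𝓐 := by
          rcases mem_union.mp hBfam with h | h
          · obtain ⟨C, hC, hCB⟩ := mem_image.mp h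
            by_cases hc : V ⊆ C ∧ Disjoint U C
            · exfalso
              have hUne : U.Nonempty := card_pos.mp (lt_of_le_of_lt (Nat.zero_le _) hcard)
              obtain ⟨u, hu⟩ := hUne
              have huB : u ∈ B := by
                rw [← hCB, setUV, if_pos hc, mem_sdiff, mem_union]
                exact ⟨Or.inr hu, Finset.disjoint_left.mp hUV hu⟩
              exact Finset.disjoint_left.mp hDUB hu huB
            · rw [setUV, if_neg hc] at hCB
              subst hCB
              exact absurd ⟨hVB, hDUB⟩ hc
          · have h2 := (mem_filter.mp h).2
            rwa [setUV, if_pos ⟨hVB, hDUB⟩] at h2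
        have ht2 : t ≤ (A ∩ ((B ∪ U) \ V)).card := hT A hA _ hBstar
        have e1 := cardKey U V A B hVA hUA
        have e2 := cardKey U V B A hVB hDUB
        have c1 : (V ∩ B).card = V.card := by rw [inter_eq_left.mpr hVB]
        have c2 : (U ∩ B).card = 0 := by rw [hUBe]; rfl
        have c3 : (V ∩ A).card = V.card := by rw [inter_eq_left.mpr hVA]
        have c4 : (U ∩ A).card = 0 := by
          rw [disjoint_iff_inter_eq_empty.mp hUA]; rfl
        have c5 : (A ∩ ((B ∪ U) \ V)).card = (((B ∪ U) \ V) ∩ A).card := by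
          rw [inter_comm]
        have c6 : (B ∩ A).card = (A ∩ B).card := by rw [inter_comm]
        omega
      · -- u₀ ∈ U ∩ B : compress with (U \ {u₀}, V \ {v₀})
        have hu₀U : u₀ ∈ U := (mem_inter.mp hu₀).1
        have hcU' : (U.erase u₀).card = U.card - 1 := card_erase_of_mem hu₀U
        have hcV' : (V.erase v₀).card = V.card - 1 := card_erase_of_mem hv₀
        have hUpos : 1 ≤ U.card := card_pos.mpr ⟨u₀, hu₀U⟩
        have hVpos : 1 ≤ V.card := card_pos.mpr ⟨v₀, hv₀⟩
        have hne : (U.erase u₀, V.erase v₀) ≠ (U, V) := by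
          intro h
          have h1 : U.erase u₀ = U := (Prod.ext_iff.mp h).1
          exact (Finset.erase_eq_self.mp h1) hu₀U
        have hV'A : V.erase v₀ ⊆ A := (erase_subset _ _).trans hVA
        have hU'A : Disjoint (U.erase u₀) A := hUA.mono_left (erase_subset _ _)
        have hA' : (A ∪ U.erase u₀) \ V.erase v₀ ∈ 𝓐 := by
          rw [← hcomp (U.erase u₀) (V.erase v₀) (erase_subset _ _) (erase_subset _ _)
            (by omega) hne]
          apply mem_union_left
          refine mem_image.mpr ⟨A, hA, ?_⟩
          rw [setUV, if_pos ⟨hV'A, hU'A⟩]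
        have ht2 : t ≤ (((A ∪ U.erase u₀) \ V.erase v₀) ∩ B).card := hT _ hA' B hB
        have e1 := cardKey U V A B hVA hUA
        have e2 := cardKey (U.erase u₀) (V.erase v₀) A B hV'A hU'A
        have c1 : (V ∩ B).card = V.card := by rw [inter_eq_left.mpr hVB]
        have c2 : (V.erase v₀ ∩ B).card = V.card - 1 := by
          rw [inter_eq_left.mpr ((erase_subset _ _).trans hVB)]
          exact hcV'
        have c3 : (U.erase u₀ ∩ B).card = (U ∩ B).card - 1 := by
          rw [erase_inter, card_erase_of_mem hu₀]
        have hUBpos : 1 ≤ (U ∩ B).card := card_pos.mpr ⟨u₀, hu₀⟩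
        omega
  · -- ¬ V ⊆ B : compress with (U, V ∩ B)
    have hne : (U, V ∩ B) ≠ (U, V) := by
      intro h
      have h2 : V ∩ B = V := (Prod.ext_iff.mp h).2
      exact hVB (inter_eq_left.mp h2)
    have hA' : (A ∪ U) \ (V ∩ B) ∈ 𝓐 := by
      rw [← hcomp U (V ∩ B) subset_rfl inter_subset_left
        (lt_of_le_of_lt (card_le_card inter_subset_left) hcard) hne]
      apply mem_union_left
      refine mem_image.mpr ⟨A, hA, ?_⟩
      rw [setUV, if_pos ⟨inter_subset_left.trans hVA, hUA⟩]
    have hset : ((A ∪ U) \ (V ∩ B)) ∩ B = ((A ∪ U) \ V) ∩ B := by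
      ext x
      simp only [mem_inter, mem_sdiff, mem_union]
      tauto
    have h := hT _ hA' B hB
    rwa [hset] at h

theorem stmt15 (n t : ℕ) (ht : 0 < t)
    (𝓐 : Finset (Finset ℕ)) (h𝓐 : 𝓐 ⊆ (Finset.Icc 1 n).powerset)
    (hT : TIntersecting t 𝓐)
    (U V : Finset ℕ) (hU : U ⊆ Finset.Icc 1 n) (hV : V ⊆ Finset.Icc 1 n)
    (hUV : Disjoint U V) (hcard : V.card < U.card)
    (hcomp : ∀ U' V' : Finset ℕ, U' ⊆ U → V' ⊆ V → V'.card < U'.card →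
      (U', V') ≠ (U, V) → famUV U' V' 𝓐 = 𝓐) :
    TIntersecting t (famUV U V 𝓐) := by
  intro X hX Y hY
  rcases famUV_mem hX with hX𝓐 | ⟨A, hA, hVA, hUA, rfl⟩
  · rcases famUV_mem hY with hY𝓐 | ⟨B, hB, hVB, hUB, rfl⟩
    · exact hT X hX𝓐 Y hY𝓐
    · rw [inter_comm]
      exact mixedCase t 𝓐 hT U V hcard hcomp B X hB hX𝓐 hX hVB hUB
  · rcases famUV_mem hY with hY𝓐 | ⟨B, hB, hVB, hUB, rfl⟩
    · exact mixedCase t 𝓐 hT U V hcard hcomp A Y hA hY𝓐 hY hVA hUA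
    · -- both compressed
      have e1 := cardKey U V A ((B ∪ U) \ V) hVA hUA
      have e2 := cardKey U V B A hVB hUB
      have ht' : t ≤ (B ∩ A).card := hT B hB A hA
      have c1 : (V ∩ ((B ∪ U) \ V)).card = 0 := by
        rw [Finset.card_eq_zero, Finset.eq_empty_iff_forall_notMem]
        intro x hx
        simp only [mem_inter, mem_sdiff, mem_union] at hx
        exact hx.2.2 hx.1
      have c2 : (U ∩ ((B ∪ U) \ V)).card = U.card := by
        congr 1
        apply inter_eq_left.mpr
        intro x hx
        simp only [mem_sdiff, mem_union]
        exact ⟨Or.inr hx, Finset.disjoint_left.mp hUV hx⟩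
      have c3 : (V ∩ A).card = V.card := by rw [inter_eq_left.mpr hVA]
      have c4 : (U ∩ A).card = 0 := by
        rw [disjoint_iff_inter_eq_empty.mp hUA]; rfl
      have c5 : (A ∩ ((B ∪ U) \ V)).card = (((B ∪ U) \ V) ∩ A).card := by
        rw [inter_comm]
      omega
end

section
/- Let $\mathcal{A} \subseteq \mathcal{P}[n]$, let $U \subseteq [n]$ have even order, let $v \in [n] - U$, and let $f : U \to U$ be a pairing function. If $\mathcal{C}_{U,v,f}(\mathcal{A}) \neq \mathcal{A}$, then $\sum_{A \in \mathcal{C}_{U,v,f}(\mathcal{A})} |A| > \sum_{A \in \mathcal{A}} |A|$. -/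
open Finset

theorem stmt17 (n : ℕ) (𝓐 : Finset (Finset ℕ)) (h𝓐 : 𝓐 ⊆ (Finset.Icc 1 n).powerset)
    (U : Finset ℕ) (hU : U ⊆ Finset.Icc 1 n) (hUeven : Even U.card)
    (v : ℕ) (hv : v ∈ Finset.Icc 1 n) (hvU : v ∉ U)
    (f : ℕ → ℕ) (hf : IsPairing f U)
    (hne : famUvf U v f 𝓐 ≠ 𝓐) :
    ∑ A ∈ 𝓐, A.card < ∑ A ∈ famUvf U v f 𝓐, A.card := by

  classical
  obtain ⟨hfU, hff, hfx⟩ := hf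
  set g := setUvf U v f with hg
  have hgv : ∀ A, v ∈ g A := by
    intro A
    by_cases h : v ∈ A
    · simp [hg, setUvf, h]
    · simp [hg, setUvf, h]
  have hcard : ∀ A : Finset ℕ, v ∉ A → (g A).card = A.card + 1 := by
    intro A hA
    have h1 : ((A ∩ U).image f).card = (A ∩ U).card :=
      Finset.card_image_of_injOn (fun a ha b hb h => by
        have ha' : a ∈ U := (Finset.mem_inter.1 ha).2
        have hb' : b ∈ U := (Finset.mem_inter.1 hb).2
        rw [← hff a ha', h, hff b hb'])
    have hd1 : Disjoint ((A ∩ U).image f) ({v} : Finset ℕ) := by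
      simp only [Finset.disjoint_singleton_right, Finset.mem_image, not_exists]
      rintro a ⟨ha, rfl⟩
      exact hvU (hfU a (Finset.mem_inter.1 ha).2)
    have hd2 : Disjoint ((A ∩ U).image f ∪ {v}) (A \ U) := by
      rw [Finset.disjoint_union_left]
      constructor
      · rw [Finset.disjoint_left]
        rintro x hx hx'
        obtain ⟨a, ha, rfl⟩ := Finset.mem_image.1 hx
        exact (Finset.mem_sdiff.1 hx').2 (hfU a (Finset.mem_inter.1 ha).2)
      · simp only [Finset.disjoint_singleton_left, Finset.mem_sdiff, not_and, not_not]
        exact fun h => absurd h hA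
    have hgA : g A = (A ∩ U).image f ∪ {v} ∪ (A \ U) := by simp [hg, setUvf, hA]
    rw [hgA, Finset.card_union_of_disjoint hd2, Finset.card_union_of_disjoint hd1, h1,
      Finset.card_singleton]
    have := Finset.card_inter_add_card_sdiff A U
    omega
  have hmem : ∀ A : Finset ℕ, v ∉ A → ∀ x,
      (x ∈ g A ↔ ((x ∈ U ∧ f x ∈ A) ∨ x = v ∨ (x ∈ A ∧ x ∉ U))) := by
    intro A hA x
    have hgA : g A = (A ∩ U).image f ∪ {v} ∪ (A \ U) := by simp [hg, setUvf, hA]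
    rw [hgA]
    simp only [Finset.mem_union, Finset.mem_image, Finset.mem_inter, Finset.mem_sdiff,
      Finset.mem_singleton]
    constructor
    · rintro ((⟨a, ⟨ha1, ha2⟩, rfl⟩ | rfl) | h)
      · exact Or.inl ⟨hfU a ha2, by rw [hff a ha2]; exact ha1⟩
      · exact Or.inr (Or.inl rfl)
      · exact Or.inr (Or.inr h)
    · rintro (⟨hxU, hfxA⟩ | rfl | h)
      · exact Or.inl (Or.inl ⟨f x, ⟨hfxA, hfU x hxU⟩, hff x hxU⟩)
      · exact Or.inl (Or.inr rfl)
      · exact Or.inr h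
  have hginj : ∀ A B : Finset ℕ, v ∉ A → v ∉ B → g A = g B → A = B := by
    intro A B hA hB h
    ext x
    by_cases hxU : x ∈ U
    · have hfx' : f x ∈ U := hfU x hxU
      have hffx : f (f x) = x := hff x hxU
      have hfxv : f x ≠ v := fun e => hvU (e ▸ hfx')
      have e1 : (f x ∈ g A) ↔ x ∈ A := by
        rw [hmem A hA]
        constructor
        · rintro (⟨_, h'⟩ | e | ⟨_, h'⟩)
          · rwa [hffx] at h'
          · exact absurd e hfxv
          · exact absurd hfx' h'
        · intro hx; exact Or.inl ⟨hfx', by rwa [hffx]⟩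
      have e2 : (f x ∈ g B) ↔ x ∈ B := by
        rw [hmem B hB]
        constructor
        · rintro (⟨_, h'⟩ | e | ⟨_, h'⟩)
          · rwa [hffx] at h'
          · exact absurd e hfxv
          · exact absurd hfx' h'
        · intro hx; exact Or.inl ⟨hfx', by rwa [hffx]⟩
      rw [← e1, h, e2]
    · by_cases hxv : x = v
      · subst hxv; simp [hA, hB]
      · have e1 : (x ∈ g A) ↔ x ∈ A := by
          rw [hmem A hA]
          constructor
          · rintro (⟨hxU', _⟩ | e | ⟨h', _⟩)
            · exact absurd hxU' hxU
            · exact absurd e hxv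
            · exact h'
          · intro hx; exact Or.inr (Or.inr ⟨hx, hxU⟩)
        have e2 : (x ∈ g B) ↔ x ∈ B := by
          rw [hmem B hB]
          constructor
          · rintro (⟨hxU', _⟩ | e | ⟨h', _⟩)
            · exact absurd hxU' hxU
            · exact absurd e hxv
            · exact h'
          · intro hx; exact Or.inr (Or.inr ⟨hx, hxU⟩)
        rw [← e1, h, e2]
  set S := 𝓐.filter (fun A => g A ∈ 𝓐) with hS
  set T := 𝓐.filter (fun A => g A ∉ 𝓐) with hT
  have hTv : ∀ A ∈ T, v ∉ A := by
    intro A hA hvA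
    have hgAA : g A = A := if_pos hvA
    obtain ⟨h1, h2⟩ := Finset.mem_filter.1 hA
    exact h2 (by rw [hgAA]; exact h1)
  have hfam : famUvf U v f 𝓐 = S ∪ T.image g := by
    ext B
    simp only [famUvf, Finset.mem_union, Finset.mem_image, Finset.mem_filter, hS, hT]
    constructor
    · rintro (⟨A, hA, rfl⟩ | ⟨hB, hgB⟩)
      · by_cases hgA : g A ∈ 𝓐
        · left
          have hggA : g (g A) = g A := if_pos (hgv A)
          exact ⟨hgA, by rw [hggA]; exact hgA⟩
        · right; exact ⟨A, ⟨hA, hgA⟩, rfl⟩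
      · left; exact ⟨hB, hgB⟩
    · rintro (⟨hB, hgB⟩ | ⟨A, ⟨hA, _⟩, rfl⟩)
      · exact Or.inr ⟨hB, hgB⟩
      · exact Or.inl ⟨A, hA, rfl⟩
  have hdisj : Disjoint S (T.image g) := by
    rw [Finset.disjoint_right]
    rintro B hB hB'
    obtain ⟨A, hA, rfl⟩ := Finset.mem_image.1 hB
    exact (Finset.mem_filter.1 hA).2 (Finset.mem_filter.1 hB').1
  have hTne : T.Nonempty := by
    rcases T.eq_empty_or_nonempty with hTe | hTne
    · exfalso
      apply hne
      rw [hfam, hTe, Finset.image_empty, Finset.union_empty, hS]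
      rw [Finset.filter_eq_self]
      intro A hA
      by_contra hgA
      have : A ∈ T := Finset.mem_filter.2 ⟨hA, hgA⟩
      rw [hTe] at this
      exact absurd this (Finset.notMem_empty A)
    · exact hTne
  have hsplit : 𝓐 = S ∪ T := (Finset.filter_union_filter_not_eq _ 𝓐).symm
  have hdisjST : Disjoint S T := Finset.disjoint_filter_filter_not 𝓐 𝓐 _
  have hsumT : ∑ B ∈ T.image g, B.card = ∑ A ∈ T, A.card + T.card := by
    rw [Finset.sum_image (fun A hA B hB h => hginj A B (hTv A hA) (hTv B hB) h)]
    rw [Finset.sum_congr rfl (fun A hA => hcard A (hTv A hA)), Finset.sum_add_distrib]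
    rw [Finset.sum_const, smul_eq_mul, mul_one]
  rw [hfam, Finset.sum_union hdisj, hsumT]
  conv_lhs => rw [hsplit]
  rw [Finset.sum_union hdisjST]
  have : 0 < T.card := Finset.card_pos.2 hTne
  omega
end
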